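/- arXiv:1212.4205 — 4 statements merged into one kernel-verified Lean document; each statement's English description precedes it below -/
import Mathlib

section
/- For every finite complex linear combination f = ∑_{k=1}^m α_k f^k of superprojective systems of L² functions (α_k ∈ ℂ), there exist superprojective systems f¹, f², f³, f⁴ such that f_n = f¹_n − f²_n + i(f³_n − f⁴_n) in L²(ℝⁿ) for every n. -/
open MeasureTheory Filter Topology Real

noncomputable section

/-- A superprojective system of L² functions: `F n` plays the role of the paper's `f_{n+1}`,
a nonnegative element of `L²(ℝ^{n+1})`, and
`∫_ℝ |f_{n+1}(x,x')|² dx' ≤ |f_n(x)|²` for a.e. `x ∈ ℝⁿ`. -/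
def IsSPS (F : ∀ n : ℕ, (Fin (n + 1) → ℝ) → ℝ) : Prop :=
  (∀ n, MemLp (F n) 2 (volume : Measure (Fin (n + 1) → ℝ))) ∧
  (∀ n, ∀ᵐ x : Fin (n + 1) → ℝ, 0 ≤ F n x) ∧
  (∀ n, ∀ᵐ x : Fin (n + 1) → ℝ,
    (∫ t : ℝ, F (n + 1) (Fin.snoc x t) ^ 2) ≤ F n x ^ 2)

/-- For a real function in `L²`, the integral of its square equals the square of the
`toReal` of its `eLpNorm`. -/
lemma integral_sq_eq_sq_toReal_eLpNorm {α : Type*} [MeasurableSpace α] {μ : Measure α}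
    {f : α → ℝ} (hf : MemLp f 2 μ) :
    ∫ a, f a ^ 2 ∂μ = ((eLpNorm f 2 μ).toReal) ^ 2 := by
  have h : (inner ℝ (hf.toLp f) (hf.toLp f) : ℝ) = ‖hf.toLp f‖ ^ 2 :=
    real_inner_self_eq_norm_sq _
  rw [MeasureTheory.L2.inner_def, MeasureTheory.Lp.norm_toLp] at h
  rw [← h]
  refine integral_congr_ae ?_
  filter_upwards [hf.coeFn_toLp] with a ha
  simp [ha, real_inner_self_eq_norm_sq, Real.norm_eq_abs, sq_abs, sq]

/-- Slicing an `L²` function on `ℝ^{n+2}` at a.e. `x ∈ ℝ^{n+1}` gives an `L²` function on `ℝ`. -/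
lemma slice_memℒp {n : ℕ} {h : (Fin (n + 2) → ℝ) → ℝ}
    (hh : MemLp h 2 (volume : Measure (Fin (n + 2) → ℝ))) :
    ∀ᵐ x : Fin (n + 1) → ℝ, MemLp (fun t => h (Fin.snoc x t)) 2 (volume : Measure ℝ) := by
  have mp1 :
      MeasurePreserving
        (MeasurableEquiv.piFinSuccAbove (fun _ : Fin (n + 2) => ℝ) (Fin.last (n + 1))).symm
        volume volume :=
    (volume_preserving_piFinSuccAbove (fun _ : Fin (n + 2) => ℝ) (Fin.last (n + 1))).symm _
  have mpswap :
      MeasurePreserving (Prod.swap : (Fin (n + 1) → ℝ) × ℝ → ℝ × (Fin (n + 1) → ℝ))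
        volume volume := by
    rw [show (volume : Measure ((Fin (n + 1) → ℝ) × ℝ)) = Measure.prod volume volume from rfl,
      show (volume : Measure (ℝ × (Fin (n + 1) → ℝ))) = Measure.prod volume volume from rfl]
    exact Measure.measurePreserving_swap
  have hH : MemLp (fun z : (Fin (n + 1) → ℝ) × ℝ => h (Fin.snoc z.1 z.2)) 2
      (volume : Measure ((Fin (n + 1) → ℝ) × ℝ)) := by
    have := (hh.comp_measurePreserving mp1).comp_measurePreserving mpswap
    convert this using 1
    funext z
    simp [Function.comp, MeasurableEquiv.piFinSuccAbove_symm_apply, Fin.insertNthEquiv,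
      Fin.insertNth_last']
  have hH' : MemLp (fun z : (Fin (n + 1) → ℝ) × ℝ => h (Fin.snoc z.1 z.2)) 2
      ((volume : Measure (Fin (n + 1) → ℝ)).prod (volume : Measure ℝ)) := hH
  have hsq : Integrable (fun z : (Fin (n + 1) → ℝ) × ℝ => h (Fin.snoc z.1 z.2) ^ 2)
      ((volume : Measure (Fin (n + 1) → ℝ)).prod (volume : Measure ℝ)) :=
    (memLp_two_iff_integrable_sq hH'.1).1 hH'
  filter_upwards [hsq.prod_right_ae, hH'.1.prodMk_left] with x h1 h2
  exact (memLp_two_iff_integrable_sq h2).2 h1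

/-- Nonnegative linear combinations of superprojective systems are superprojective. -/
lemma isSPS_sum (m : ℕ) (c : Fin m → ℝ) (hc : ∀ k, 0 ≤ c k)
    (F : Fin m → ∀ n : ℕ, (Fin (n + 1) → ℝ) → ℝ) (hF : ∀ k, IsSPS (F k)) :
    IsSPS (fun n x => ∑ k, c k * F k n x) := by
  refine ⟨fun n => ?_, fun n => ?_, fun n => ?_⟩
  · exact memLp_finset_sum Finset.univ (fun k _ => ((hF k).1 n).const_mul (c k))
  · filter_upwards [ae_all_iff.2 fun k => (hF k).2.1 n] with x hx
    exact Finset.sum_nonneg fun k _ => mul_nonneg (hc k) (hx k)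
  · have hsl : ∀ᵐ x : Fin (n + 1) → ℝ,
        ∀ k, MemLp (fun t => F k (n + 1) (Fin.snoc x t)) 2 (volume : Measure ℝ) :=
      ae_all_iff.2 fun k => slice_memℒp ((hF k).1 (n + 1))
    filter_upwards [hsl, ae_all_iff.2 fun k => (hF k).2.1 n,
      ae_all_iff.2 fun k => (hF k).2.2 n] with x hx hpos hle
    set g : Fin m → ℝ → ℝ := fun k t => F k (n + 1) (Fin.snoc x t) with hg
    have hnorm : ∀ k, (eLpNorm (g k) 2 volume).toReal ≤ F k n x := by
      intro k
      have h1 : ((eLpNorm (g k) 2 volume).toReal) ^ 2 ≤ (F k n x) ^ 2 := by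
        rw [← integral_sq_eq_sq_toReal_eLpNorm (hx k)]
        exact hle k
      have h2 := Real.sqrt_le_sqrt h1
      rwa [Real.sqrt_sq ENNReal.toReal_nonneg, Real.sqrt_sq (hpos k)] at h2
    have hS : MemLp (fun t => ∑ k, c k * g k t) 2 (volume : Measure ℝ) :=
      memLp_finset_sum Finset.univ (fun k _ => (hx k).const_mul (c k))
    show (∫ t : ℝ, (∑ k, c k * g k t) ^ 2) ≤ (∑ k, c k * F k n x) ^ 2
    rw [integral_sq_eq_sq_toReal_eLpNorm hS]
    have hEL : eLpNorm (fun t => ∑ k, c k * g k t) 2 volume ≤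
        ∑ k, ENNReal.ofReal (c k) * eLpNorm (g k) 2 volume := by
      have heq : (fun t => ∑ k, c k * g k t) = ∑ k, (fun t => c k * g k t) := by
        funext t; simp
      rw [heq]
      refine (eLpNorm_sum_le (fun k _ => ((hx k).const_mul (c k)).1) one_le_two).trans ?_
      refine Finset.sum_le_sum fun k _ => ?_
      have : (fun t => c k * g k t) = (c k) • (g k) := by funext t; simp
      rw [this, eLpNorm_const_smul, Real.enorm_eq_ofReal (hc k)]
    have hfin : ∀ k ∈ Finset.univ, ENNReal.ofReal (c k) * eLpNorm (g k) 2 volume ≠ ⊤ :=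
      fun k _ => ENNReal.mul_ne_top ENNReal.ofReal_ne_top (hx k).2.ne
    have h3 : (eLpNorm (fun t => ∑ k, c k * g k t) 2 volume).toReal ≤
        ∑ k, c k * (eLpNorm (g k) 2 volume).toReal := by
      refine (ENNReal.toReal_mono (ENNReal.sum_ne_top.2 hfin) hEL).trans_eq ?_
      rw [ENNReal.toReal_sum hfin]
      refine Finset.sum_congr rfl fun k _ => ?_
      rw [ENNReal.toReal_mul, ENNReal.toReal_ofReal (hc k)]
    have h4 : ∑ k, c k * (eLpNorm (g k) 2 volume).toReal ≤ ∑ k, c k * F k n x :=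
      Finset.sum_le_sum fun k _ => mul_le_mul_of_nonneg_left (hnorm k) (hc k)
    exact pow_le_pow_left₀ ENNReal.toReal_nonneg (h3.trans h4) 2

/-- Every finite complex linear combination `f = ∑ α_k f^k` of superprojective systems can
be written as `f = f¹ - f² + i (f³ - f⁴)` (in `L²(ℝⁿ)`, i.e. a.e., for every `n`) with
`f¹, f², f³, f⁴` superprojective systems. -/
theorem decomposition_of_combination (m : ℕ) (α : Fin m → ℂ)
    (F : Fin m → ∀ n : ℕ, (Fin (n + 1) → ℝ) → ℝ) (hF : ∀ k, IsSPS (F k)) :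
    ∃ G : Fin 4 → ∀ n : ℕ, (Fin (n + 1) → ℝ) → ℝ,
      (∀ j, IsSPS (G j)) ∧
      ∀ n, ∀ᵐ x : Fin (n + 1) → ℝ,
        (∑ k, α k * (F k n x : ℂ)) =
          ((G 0 n x : ℂ) - G 1 n x) + Complex.I * ((G 2 n x : ℂ) - G 3 n x) := by
  set a : Fin m → ℝ := fun k => max (α k).re 0 with ha
  set b : Fin m → ℝ := fun k => max (-(α k).re) 0 with hb
  set c : Fin m → ℝ := fun k => max (α k).im 0 with hc
  set d : Fin m → ℝ := fun k => max (-(α k).im) 0 with hd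
  refine ⟨![fun n x => ∑ k, a k * F k n x, fun n x => ∑ k, b k * F k n x,
    fun n x => ∑ k, c k * F k n x, fun n x => ∑ k, d k * F k n x], ?_, ?_⟩
  · intro j
    fin_cases j
    · exact isSPS_sum m a (fun k => le_max_right _ _) F hF
    · exact isSPS_sum m b (fun k => le_max_right _ _) F hF
    · exact isSPS_sum m c (fun k => le_max_right _ _) F hF
    · exact isSPS_sum m d (fun k => le_max_right _ _) F hF
  · intro n
    refine Eventually.of_forall fun x => ?_
    simp only [Matrix.cons_val_zero, Matrix.cons_val_one, Matrix.head_cons,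
      Matrix.cons_val_two, Matrix.tail_cons, Matrix.cons_val_three]
    push_cast
    rw [← Finset.sum_sub_distrib, ← Finset.sum_sub_distrib, Finset.mul_sum,
      ← Finset.sum_add_distrib]
    refine Finset.sum_congr rfl fun k _ => ?_
    have hre : a k - b k = (α k).re := max_zero_sub_max_neg_zero_eq_self _
    have him : c k - d k = (α k).im := max_zero_sub_max_neg_zero_eq_self _
    rw [← Complex.re_add_im (α k)]
    rw [← hre, ← him]
    push_cast
    ring
end
end

section
/- Let f = {f_n} and g = {g_n} be elements of ℒ²(ℝ^∞). Suppose μ_f and μ_g are finite positive Borel measures on ℝ^ℕ (with the product topology) whose pushforwards under the projection p_n : ℝ^ℕ → ℝⁿ have densities x ↦ lim_{k→∞} ∫_{ℝ^k} |f_{n+k}(x,x')|² dx' and x ↦ lim_{k→∞} ∫_{ℝ^k} |g_{n+k}(x,x')|² dx' with respect to Lebesgue measure, respectively, and suppose ρ is a complex Borel measure on ℝ^ℕ whose pushforward under p_n has density x ↦ lim_{k→∞} ∫_{ℝ^k} f_{n+k}(x,x') \overline{g_{n+k}(x,x')} dx'. Then the total variation measure satisfies |ρ|(E) ≤ √(μ_f(E))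 · √(μ_g(E)) for every Borel set E ⊆ ℝ^ℕ. -/
open MeasureTheory Filter Topology Real

noncomputable section

/-- The elements of ℒ²(ℝ^∞): finite complex linear combinations of superprojective systems. -/
def InL2 (f : ∀ n : ℕ, (Fin (n + 1) → ℝ) → ℂ) : Prop :=
  ∃ (m : ℕ) (α : Fin m → ℂ) (F : Fin m → ∀ n : ℕ, (Fin (n + 1) → ℝ) → ℝ),
    (∀ k, IsSPS (F k)) ∧ ∀ n x, f n x = ∑ k, α k * (F k n x : ℂ)

/-- Concatenation of `x ∈ ℝ^{n+1}` and `x' ∈ ℝ^k` into a point of `ℝ^{(n+k)+1}`. -/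
def app {n k : ℕ} (x : Fin (n + 1) → ℝ) (x' : Fin k → ℝ) : Fin (n + k + 1) → ℝ :=
  fun i => Fin.append x x' (Fin.cast (by omega) i)

/-- Projection of `ℝ^ℕ` onto the first `n+1` coordinates. -/
def proj (n : ℕ) : (ℕ → ℝ) → (Fin (n + 1) → ℝ) := fun y i => y i

/-- The total variation measure of a complex Borel measure, as a supremum over countable
measurable partitions. -/
def cTV (ρ : ComplexMeasure (ℕ → ℝ)) (E : Set (ℕ → ℝ)) : ENNReal :=
  ⨆ P : {P : ℕ → Set (ℕ → ℝ) //
      (∀ i, MeasurableSet (P i)) ∧ Pairwise (Function.onFun Disjoint P) ∧ (⋃ i, P i) = E},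
    ∑' i, ‖ρ (P.1 i)‖₊


section Aux
open ENNReal
open scoped symmDiff

lemma measurable_proj' (n : ℕ) : Measurable (proj n) :=
  measurable_pi_lambda _ fun _ => measurable_pi_apply _

/-! ### The cylinder algebra -/

def Cyl : Set (Set (ℕ → ℝ)) :=
  {S | ∃ (n : ℕ) (A : Set (Fin (n+1) → ℝ)), MeasurableSet A ∧ S = proj n ⁻¹' A}

lemma Cyl_measurableSet {S : Set (ℕ → ℝ)} (hS : S ∈ Cyl) : MeasurableSet S := by
  obtain ⟨n, A, hA, rfl⟩ := hS
  exact measurable_proj' n hA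

lemma proj_lift {n m : ℕ} (h : n ≤ m) :
    proj n = (fun (x : Fin (m+1) → ℝ) (i : Fin (n+1)) => x (Fin.castLE (by omega) i)) ∘ proj m :=
  rfl

lemma Cyl_lift {n m : ℕ} (h : n ≤ m) (A : Set (Fin (n+1) → ℝ)) (hA : MeasurableSet A) :
    ∃ B : Set (Fin (m+1) → ℝ), MeasurableSet B ∧ proj n ⁻¹' A = proj m ⁻¹' B := by
  refine ⟨(fun (x : Fin (m+1) → ℝ) (i : Fin (n+1)) => x (Fin.castLE (by omega) i)) ⁻¹' A, ?_, ?_⟩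
  · exact (measurable_pi_lambda _ fun i => measurable_pi_apply _) hA
  · rw [proj_lift h, Set.preimage_comp]

lemma isSetAlgebra_Cyl : IsSetAlgebra Cyl where
  empty_mem := ⟨0, ∅, MeasurableSet.empty, by simp⟩
  compl_mem := by
    rintro S ⟨n, A, hA, rfl⟩
    exact ⟨n, Aᶜ, hA.compl, by simp⟩
  union_mem := by
    rintro S T ⟨n, A, hA, rfl⟩ ⟨m, B, hB, rfl⟩
    obtain ⟨A', hA', hAeq⟩ := Cyl_lift (le_max_left n m) A hA
    obtain ⟨B', hB', hBeq⟩ := Cyl_lift (le_max_right n m) B hB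
    exact ⟨max n m, A' ∪ B', hA'.union hB', by rw [hAeq, hBeq, Set.preimage_union]⟩

lemma generateFrom_Cyl :
    (inferInstance : MeasurableSpace (ℕ → ℝ)) = MeasurableSpace.generateFrom Cyl := by
  apply le_antisymm
  · rw [show (inferInstance : MeasurableSpace (ℕ → ℝ)) = MeasurableSpace.pi from rfl]
    refine iSup_le fun j => ?_
    refine measurable_iff_comap_le.mp ?_
    intro B hB
    have : (fun y : ℕ → ℝ => y j) ⁻¹' B
        = proj j ⁻¹' ((fun x : Fin (j+1) → ℝ => x (Fin.last j)) ⁻¹' B) := rfl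
    rw [this]
    exact MeasurableSpace.measurableSet_generateFrom
      ⟨j, _, measurable_pi_apply (Fin.last j) hB, rfl⟩
  · exact MeasurableSpace.generateFrom_le fun S hS => Cyl_measurableSet hS

/-! ### Total variation bounds for complex measures -/

lemma isFiniteMeasure_totalVariation {X : Type*} [MeasurableSpace X] (s : SignedMeasure X) :
    IsFiniteMeasure s.totalVariation := by
  unfold SignedMeasure.totalVariation
  infer_instance

lemma abs_apply_le_totalVariation {X : Type*} [MeasurableSpace X] (s : SignedMeasure X)
    {A : Set X} (hA : MeasurableSet A) :
    |s A| ≤ (s.totalVariation A).toReal := by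
  conv_lhs => rw [← s.toSignedMeasure_toJordanDecomposition]
  rw [JordanDecomposition.toSignedMeasure, VectorMeasure.sub_apply,
    Measure.toSignedMeasure_apply_measurable hA, Measure.toSignedMeasure_apply_measurable hA,
    SignedMeasure.totalVariation, Measure.add_apply,
    ENNReal.toReal_add (measure_ne_top _ _) (measure_ne_top _ _)]
  refine (abs_sub _ _).trans ?_
  rw [abs_of_nonneg measureReal_nonneg, abs_of_nonneg measureReal_nonneg, measureReal_def,
    measureReal_def]

def cmVar {X : Type*} [MeasurableSpace X] (ρ : ComplexMeasure X) : Measure X :=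
  (ComplexMeasure.re ρ).totalVariation + (ComplexMeasure.im ρ).totalVariation

lemma isFiniteMeasure_cmVar {X : Type*} [MeasurableSpace X] (ρ : ComplexMeasure X) :
    IsFiniteMeasure (cmVar ρ) := by
  haveI := isFiniteMeasure_totalVariation (ComplexMeasure.re ρ)
  haveI := isFiniteMeasure_totalVariation (ComplexMeasure.im ρ)
  unfold cmVar; infer_instance

lemma norm_apply_le_cmVar {X : Type*} [MeasurableSpace X] (ρ : ComplexMeasure X)
    {A : Set X} (hA : MeasurableSet A) :
    ‖ρ A‖ ≤ (cmVar ρ A).toReal := by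
  haveI := isFiniteMeasure_totalVariation (ComplexMeasure.re ρ)
  haveI := isFiniteMeasure_totalVariation (ComplexMeasure.im ρ)
  calc ‖ρ A‖ ≤ |(ρ A).re| + |(ρ A).im| := Complex.norm_le_abs_re_add_abs_im _
    _ ≤ ((ComplexMeasure.re ρ).totalVariation A).toReal
        + ((ComplexMeasure.im ρ).totalVariation A).toReal := by
        rw [show (ρ A).re = ComplexMeasure.re ρ A from rfl,
          show (ρ A).im = ComplexMeasure.im ρ A from rfl]
        exact add_le_add (abs_apply_le_totalVariation _ hA) (abs_apply_le_totalVariation _ hA)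
    _ = (cmVar ρ A).toReal := by
        rw [cmVar, Measure.add_apply,
          ENNReal.toReal_add (measure_ne_top _ _) (measure_ne_top _ _)]

/-! ### The appending map is measure preserving -/

section MP
variable {n k : ℕ}

def e1 : ((i : Fin (n+1) ⊕ Fin k) → ℝ) ≃ᵐ (Fin (n+1) → ℝ) × (Fin k → ℝ) :=
  MeasurableEquiv.sumPiEquivProdPi (fun _ => ℝ)

def e2 : ((i : Fin (n+1) ⊕ Fin k) → ℝ) ≃ᵐ (Fin (n+1+k) → ℝ) :=
  MeasurableEquiv.piCongrLeft (fun _ => ℝ) finSumFinEquiv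

def e3 : (Fin (n+1+k) → ℝ) ≃ᵐ (Fin (n+k+1) → ℝ) :=
  MeasurableEquiv.piCongrLeft (fun _ => ℝ) (finCongr (by omega))

lemma app_eq (x : Fin (n+1) → ℝ) (x' : Fin k → ℝ) :
    e3 (e2 ((e1 (n := n) (k := k)).symm (x, x'))) = app x x' := by
  funext i
  obtain ⟨j, rfl⟩ : ∃ j : Fin (n+1+k), finCongr (by omega : n+1+k = n+k+1) j = i :=
    ⟨(finCongr (by omega)).symm i, by simp⟩
  obtain ⟨s, rfl⟩ : ∃ s : Fin (n+1) ⊕ Fin k, finSumFinEquiv s = j :=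
    ⟨finSumFinEquiv.symm j, by simp⟩
  have h3 : e3 (n := n) (k := k) (e2 ((e1 (n := n) (k := k)).symm (x, x')))
      (finCongr (by omega) (finSumFinEquiv s))
      = e2 ((e1 (n := n) (k := k)).symm (x, x')) (finSumFinEquiv s) := by
    exact Equiv.piCongrLeft_apply_apply _ _ _ _
  rw [h3]
  have h2 : e2 (n := n) (k := k) ((e1 (n := n) (k := k)).symm (x, x')) (finSumFinEquiv s)
      = (e1 (n := n) (k := k)).symm (x, x') s := by
    simp [e2, MeasurableEquiv.piCongrLeft]
  rw [h2]
  have happ : app x x' (finCongr (by omega : n+1+k = n+k+1) (finSumFinEquiv s))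
      = Fin.append x x' (finSumFinEquiv s) := by
    simp [app, Fin.cast_cast]
  rw [happ]
  cases s with
  | inl a => simp [e1, MeasurableEquiv.sumPiEquivProdPi, Fin.append_left]
  | inr b => simp [e1, MeasurableEquiv.sumPiEquivProdPi, Fin.append_right]

lemma measurePreserving_app (n k : ℕ) :
    MeasurePreserving (fun p : (Fin (n+1) → ℝ) × (Fin k → ℝ) => app p.1 p.2)
      ((volume : Measure (Fin (n+1) → ℝ)).prod (volume : Measure (Fin k → ℝ))) volume := by
  have h1 := measurePreserving_sumPiEquivProdPi_symm
    (fun _ : Fin (n+1) ⊕ Fin k => (volume : Measure ℝ))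
  have h2 := volume_measurePreserving_piCongrLeft (fun _ : Fin (n+1+k) => ℝ) finSumFinEquiv
  have h3 := volume_measurePreserving_piCongrLeft (fun _ : Fin (n+k+1) => ℝ)
    (finCongr (by omega : n+1+k = n+k+1))
  have comp := (h3.comp h2).comp h1
  have heq : (fun p : (Fin (n+1) → ℝ) × (Fin k → ℝ) => app p.1 p.2)
      = ⇑(e3 (n := n) (k := k)) ∘ ⇑(e2 (n := n) (k := k)) ∘ ⇑(e1 (n := n) (k := k)).symm := by
    funext p
    exact (app_eq p.1 p.2).symm
  rw [heq]
  exact comp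

end MP

/-! ### ℒ² facts -/

lemma InL2.memℒp {f : ∀ n : ℕ, (Fin (n + 1) → ℝ) → ℂ} (hf : InL2 f) (m : ℕ) :
    MemLp (f m) 2 (volume : Measure (Fin (m+1) → ℝ)) := by
  obtain ⟨N, α, F, hSPS, hsum⟩ := hf
  have : f m = fun x => ∑ k, α k * (F k m x : ℂ) := funext fun x => hsum m x
  rw [this]
  exact memLp_finset_sum _ fun k _ => (((hSPS k).1 m).ofReal).const_mul (α k)

lemma two_conj : Real.HolderConjugate 2 2 := Real.HolderConjugate.two_two

lemma rpow_two_eq (c : ℝ) : c ^ (2:ℝ) = c ^ 2 := by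
  rw [show (2:ℝ) = ((2:ℕ):ℝ) by norm_num, Real.rpow_natCast]

/-! ### Cauchy–Schwarz on cylinder sets -/

lemma cylinder_bound
    (f g : ∀ n : ℕ, (Fin (n + 1) → ℝ) → ℂ) (hf : InL2 f) (hg : InL2 g)
    (μf μg : Measure (ℕ → ℝ)) (ρ : ComplexMeasure (ℕ → ℝ)) (n : ℕ)
    (hfd : (Fin (n + 1) → ℝ) → ℝ)
    (hfd_lim : ∀ᵐ x : Fin (n + 1) → ℝ,
        Tendsto (fun k => ∫ x' : Fin k → ℝ, ‖f (n + k) (app x x')‖ ^ 2) atTop (𝓝 (hfd x)))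
    (hfd_eq : μf.map (proj n) = volume.withDensity (fun x => ENNReal.ofReal (hfd x)))
    (hgd : (Fin (n + 1) → ℝ) → ℝ)
    (hgd_lim : ∀ᵐ x : Fin (n + 1) → ℝ,
        Tendsto (fun k => ∫ x' : Fin k → ℝ, ‖g (n + k) (app x x')‖ ^ 2) atTop (𝓝 (hgd x)))
    (hgd_eq : μg.map (proj n) = volume.withDensity (fun x => ENNReal.ofReal (hgd x)))
    (hd : (Fin (n + 1) → ℝ) → ℂ)
    (hd_lim : ∀ᵐ x : Fin (n + 1) → ℝ,
        Tendsto (fun k => ∫ x' : Fin k → ℝ,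
          f (n + k) (app x x') * (starRingEnd ℂ) (g (n + k) (app x x'))) atTop (𝓝 (hd x)))
    (hd_eq : ∀ E : Set (Fin (n + 1) → ℝ), MeasurableSet E → (ρ.map (proj n)) E = ∫ x in E, hd x)
    {A : Set (Fin (n + 1) → ℝ)} (hA : MeasurableSet A) :
    (‖ρ (proj n ⁻¹' A)‖₊ : ENNReal)
      ≤ (μf (proj n ⁻¹' A)) ^ (1/2:ℝ) * (μg (proj n ⁻¹' A)) ^ (1/2:ℝ) := by
  -- ℒ² membership of the combined maps
  have hFk : ∀ k, MemLp (fun p : (Fin (n+1) → ℝ) × (Fin k → ℝ) => f (n+k) (app p.1 p.2)) 2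
      ((volume : Measure (Fin (n+1) → ℝ)).prod volume) :=
    fun k => (hf.memℒp (n+k)).comp_measurePreserving (measurePreserving_app n k)
  have hGk : ∀ k, MemLp (fun p : (Fin (n+1) → ℝ) × (Fin k → ℝ) => g (n+k) (app p.1 p.2)) 2
      ((volume : Measure (Fin (n+1) → ℝ)).prod volume) :=
    fun k => (hg.memℒp (n+k)).comp_measurePreserving (measurePreserving_app n k)
  -- integrability of squared norms on the product
  have hIf : ∀ k, Integrable (fun p : (Fin (n+1) → ℝ) × (Fin k → ℝ) => ‖f (n+k) (app p.1 p.2)‖ ^ 2)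
      ((volume : Measure (Fin (n+1) → ℝ)).prod volume) := by
    intro k
    have h := (hFk k).integrable_norm_rpow two_ne_zero ENNReal.ofNat_ne_top
    have : (fun p : (Fin (n+1) → ℝ) × (Fin k → ℝ) =>
        ‖f (n+k) (app p.1 p.2)‖ ^ (2:ℝ≥0∞).toReal)
        = fun p => ‖f (n+k) (app p.1 p.2)‖ ^ 2 := by
      funext p; rw [ENNReal.toReal_ofNat, rpow_two_eq]
    rwa [this] at h
  have hIg : ∀ k, Integrable (fun p : (Fin (n+1) → ℝ) × (Fin k → ℝ) => ‖g (n+k) (app p.1 p.2)‖ ^ 2)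
      ((volume : Measure (Fin (n+1) → ℝ)).prod volume) := by
    intro k
    have h := (hGk k).integrable_norm_rpow two_ne_zero ENNReal.ofNat_ne_top
    have : (fun p : (Fin (n+1) → ℝ) × (Fin k → ℝ) =>
        ‖g (n+k) (app p.1 p.2)‖ ^ (2:ℝ≥0∞).toReal)
        = fun p => ‖g (n+k) (app p.1 p.2)‖ ^ 2 := by
      funext p; rw [ENNReal.toReal_ofNat, rpow_two_eq]
    rwa [this] at h
  -- MemLp of slices
  have hslice_f : ∀ k, ∀ᵐ x : Fin (n+1) → ℝ,
      MemLp (fun y : Fin k → ℝ => f (n+k) (app x y)) 2 volume := by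
    intro k
    filter_upwards [(hFk k).aestronglyMeasurable.prodMk_left, (hIf k).prod_right_ae]
      with x h1 h2
    exact (memLp_two_iff_integrable_sq_norm h1).mpr h2
  have hslice_g : ∀ k, ∀ᵐ x : Fin (n+1) → ℝ,
      MemLp (fun y : Fin k → ℝ => g (n+k) (app x y)) 2 volume := by
    intro k
    filter_upwards [(hGk k).aestronglyMeasurable.prodMk_left, (hIg k).prod_right_ae]
      with x h1 h2
    exact (memLp_two_iff_integrable_sq_norm h1).mpr h2
  -- per-k Cauchy-Schwarz
  have key : ∀ k, ∀ᵐ x : Fin (n+1) → ℝ,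
      ‖∫ y : Fin k → ℝ, f (n+k) (app x y) * (starRingEnd ℂ) (g (n+k) (app x y))‖
        ≤ (∫ y : Fin k → ℝ, ‖f (n+k) (app x y)‖ ^ 2) ^ (1/2:ℝ)
          * (∫ y : Fin k → ℝ, ‖g (n+k) (app x y)‖ ^ 2) ^ (1/2:ℝ) := by
    intro k
    filter_upwards [hslice_f k, hslice_g k] with x hu hv
    have hof : ENNReal.ofReal (2:ℝ) = 2 := by norm_num
    have hu2 : MemLp (fun y : Fin k → ℝ => f (n+k) (app x y)) (ENNReal.ofReal (2:ℝ)) volume := by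
      rwa [hof]
    have hv2 : MemLp (fun y : Fin k → ℝ => g (n+k) (app x y)) (ENNReal.ofReal (2:ℝ)) volume := by
      rwa [hof]
    calc ‖∫ y : Fin k → ℝ, f (n+k) (app x y) * (starRingEnd ℂ) (g (n+k) (app x y))‖
        ≤ ∫ y : Fin k → ℝ, ‖f (n+k) (app x y)‖ * ‖g (n+k) (app x y)‖ := by
          refine (norm_integral_le_integral_norm _).trans_eq (integral_congr_ae ?_)
          filter_upwards with y
          rw [norm_mul, RCLike.norm_conj]
      _ ≤ (∫ y : Fin k → ℝ, ‖f (n+k) (app x y)‖ ^ (2:ℝ)) ^ (1/(2:ℝ))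
          * (∫ y : Fin k → ℝ, ‖g (n+k) (app x y)‖ ^ (2:ℝ)) ^ (1/(2:ℝ)) :=
          integral_mul_norm_le_Lp_mul_Lq two_conj hu2 hv2
      _ = (∫ y : Fin k → ℝ, ‖f (n+k) (app x y)‖ ^ 2) ^ (1/2:ℝ)
          * (∫ y : Fin k → ℝ, ‖g (n+k) (app x y)‖ ^ 2) ^ (1/2:ℝ) := by
          simp_rw [rpow_two_eq]
  -- the pointwise bound on densities
  have AE1 : ∀ᵐ x : Fin (n+1) → ℝ,
      ‖hd x‖ ≤ (hfd x) ^ (1/2:ℝ) * (hgd x) ^ (1/2:ℝ) ∧ 0 ≤ hfd x ∧ 0 ≤ hgd x := by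
    filter_upwards [hfd_lim, hgd_lim, hd_lim, ae_all_iff.mpr key] with x hfx hgx hdx hkx
    have h0f : 0 ≤ hfd x :=
      ge_of_tendsto' hfx fun k => integral_nonneg fun y => by positivity
    have h0g : 0 ≤ hgd x :=
      ge_of_tendsto' hgx fun k => integral_nonneg fun y => by positivity
    refine ⟨?_, h0f, h0g⟩
    refine le_of_tendsto_of_tendsto' (hdx.norm)
      (((hfx.rpow_const (Or.inr (by norm_num))).mul
        (hgx.rpow_const (Or.inr (by norm_num))))) hkx
  -- measurability of densities
  have haf : ∀ k, AEStronglyMeasurable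
      (fun x : Fin (n+1) → ℝ => ∫ y : Fin k → ℝ, ‖f (n+k) (app x y)‖ ^ 2) volume := fun k =>
    ((hFk k).aestronglyMeasurable.norm.aemeasurable.pow_const
      2).aestronglyMeasurable.integral_prod_right'
  have hag : ∀ k, AEStronglyMeasurable
      (fun x : Fin (n+1) → ℝ => ∫ y : Fin k → ℝ, ‖g (n+k) (app x y)‖ ^ 2) volume := fun k =>
    ((hGk k).aestronglyMeasurable.norm.aemeasurable.pow_const
      2).aestronglyMeasurable.integral_prod_right'
  have hfd_meas : AEMeasurable hfd (volume : Measure (Fin (n+1) → ℝ)) :=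
    aemeasurable_of_tendsto_metrizable_ae atTop (fun k => (haf k).aemeasurable) hfd_lim
  have hgd_meas : AEMeasurable hgd (volume : Measure (Fin (n+1) → ℝ)) :=
    aemeasurable_of_tendsto_metrizable_ae atTop (fun k => (hag k).aemeasurable) hgd_lim
  -- main computation
  have hproj := measurable_proj' n
  have e0 : ρ (proj n ⁻¹' A) = ∫ x in A, hd x := by
    rw [← VectorMeasure.map_apply ρ hproj hA]
    exact hd_eq A hA
  calc (‖ρ (proj n ⁻¹' A)‖₊ : ℝ≥0∞) = ‖∫ x in A, hd x‖₊ := by rw [e0]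
    _ ≤ ∫⁻ x in A, ‖hd x‖₊ := enorm_integral_le_lintegral_enorm _
    _ ≤ ∫⁻ x in A, (ENNReal.ofReal (hfd x)) ^ (1/2:ℝ) * (ENNReal.ofReal (hgd x)) ^ (1/2:ℝ) := by
        refine lintegral_mono_ae (ae_restrict_of_ae ?_)
        filter_upwards [AE1] with x hx
        obtain ⟨h1, h2, h3⟩ := hx
        rw [← enorm_eq_nnnorm, ← ofReal_norm]
        calc ENNReal.ofReal ‖hd x‖
            ≤ ENNReal.ofReal ((hfd x) ^ (1/2:ℝ) * (hgd x) ^ (1/2:ℝ)) :=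
              ENNReal.ofReal_le_ofReal h1
          _ = (ENNReal.ofReal (hfd x)) ^ (1/2:ℝ) * (ENNReal.ofReal (hgd x)) ^ (1/2:ℝ) := by
              rw [ENNReal.ofReal_mul (rpow_nonneg h2 _),
                ENNReal.ofReal_rpow_of_nonneg h2 (by norm_num),
                ENNReal.ofReal_rpow_of_nonneg h3 (by norm_num)]
    _ ≤ (∫⁻ x in A, ((ENNReal.ofReal (hfd x)) ^ (1/2:ℝ)) ^ (2:ℝ)) ^ (1/(2:ℝ))
        * (∫⁻ x in A, ((ENNReal.ofReal (hgd x)) ^ (1/2:ℝ)) ^ (2:ℝ)) ^ (1/(2:ℝ)) := by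
        refine ENNReal.lintegral_mul_le_Lp_mul_Lq _ two_conj ?_ ?_
        · exact (hfd_meas.restrict.ennreal_ofReal.pow_const _)
        · exact (hgd_meas.restrict.ennreal_ofReal.pow_const _)
    _ = (∫⁻ x in A, ENNReal.ofReal (hfd x)) ^ (1/2:ℝ)
        * (∫⁻ x in A, ENNReal.ofReal (hgd x)) ^ (1/2:ℝ) := by
        congr 1 <;> (congr 1; refine lintegral_congr fun x => ?_) <;>
          (rw [← ENNReal.rpow_mul]; norm_num)
    _ = (μf (proj n ⁻¹' A)) ^ (1/2:ℝ) * (μg (proj n ⁻¹' A)) ^ (1/2:ℝ) := by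
        rw [← withDensity_apply _ hA, ← withDensity_apply _ hA, ← hfd_eq, ← hgd_eq,
          Measure.map_apply hproj hA, Measure.map_apply hproj hA]

/-! ### Extension to all Borel sets -/

lemma borel_bound
    (f g : ∀ n : ℕ, (Fin (n + 1) → ℝ) → ℂ) (hf : InL2 f) (hg : InL2 g)
    (μf μg : Measure (ℕ → ℝ)) [IsFiniteMeasure μf] [IsFiniteMeasure μg]
    (hμf : ∀ n, ∃ h : (Fin (n + 1) → ℝ) → ℝ,
      (∀ᵐ x : Fin (n + 1) → ℝ,
        Tendsto (fun k => ∫ x' : Fin k → ℝ, ‖f (n + k) (app x x')‖ ^ 2) atTop (𝓝 (h x))) ∧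
      μf.map (proj n) = volume.withDensity (fun x => ENNReal.ofReal (h x)))
    (hμg : ∀ n, ∃ h : (Fin (n + 1) → ℝ) → ℝ,
      (∀ᵐ x : Fin (n + 1) → ℝ,
        Tendsto (fun k => ∫ x' : Fin k → ℝ, ‖g (n + k) (app x x')‖ ^ 2) atTop (𝓝 (h x))) ∧
      μg.map (proj n) = volume.withDensity (fun x => ENNReal.ofReal (h x)))
    (ρ : ComplexMeasure (ℕ → ℝ))
    (hρ : ∀ n, ∃ h : (Fin (n + 1) → ℝ) → ℂ,
      (∀ᵐ x : Fin (n + 1) → ℝ,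
        Tendsto (fun k => ∫ x' : Fin k → ℝ,
          f (n + k) (app x x') * (starRingEnd ℂ) (g (n + k) (app x x'))) atTop (𝓝 (h x))) ∧
      ∀ E : Set (Fin (n + 1) → ℝ), MeasurableSet E → (ρ.map (proj n)) E = ∫ x in E, h x)
    {A : Set (ℕ → ℝ)} (hA : MeasurableSet A) :
    (‖ρ A‖₊ : ENNReal) ≤ (μf A) ^ (1/2:ℝ) * (μg A) ^ (1/2:ℝ) := by
  haveI := isFiniteMeasure_cmVar ρ
  set ν : Measure (ℕ → ℝ) := μf + μg + cmVar ρ with hν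
  haveI : IsFiniteMeasure ν := by rw [hν]; infer_instance
  have hdense := Measure.MeasureDense.of_generateFrom_isSetAlgebra_finite (μ := ν)
    isSetAlgebra_Cyl generateFrom_Cyl
  have hle : ∀ (μ' : Measure (ℕ → ℝ)), (μ' = μf ∨ μ' = μg ∨ μ' = cmVar ρ) →
      ∀ s : Set (ℕ → ℝ), μ' s ≤ ν s := by
    intro μ' hμ' s
    rw [hν, Measure.add_apply, Measure.add_apply]
    rcases hμ' with rfl | rfl | rfl
    · exact le_add_right (le_add_right le_rfl)
    · exact le_add_right (le_add_left le_rfl)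
    · exact le_add_left le_rfl
  set a := (μf A).toReal with ha
  set b := (μg A).toReal with hb
  have hreal : ‖ρ A‖ ≤ a ^ (1/2:ℝ) * b ^ (1/2:ℝ) := by
    have hε : ∀ ε : ℝ, 0 < ε →
        ‖ρ A‖ ≤ (a + ε) ^ (1/2:ℝ) * (b + ε) ^ (1/2:ℝ) + 2*ε := by
      intro ε hε
      obtain ⟨C, hCyl, hsd⟩ := hdense.approx A hA (measure_ne_top ν A) ε hε
      have hCm : MeasurableSet C := Cyl_measurableSet hCyl
      have hsd' : ∀ (μ' : Measure (ℕ → ℝ)), (μ' = μf ∨ μ' = μg ∨ μ' = cmVar ρ) →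
          μ' (A ∆ C) < ENNReal.ofReal ε :=
        fun μ' h => lt_of_le_of_lt (hle μ' h _) hsd
      have hρC : ‖ρ C‖ ≤ ((μf C).toReal) ^ (1/2:ℝ) * ((μg C).toReal) ^ (1/2:ℝ) := by
        obtain ⟨m, B, hB, rfl⟩ := hCyl
        obtain ⟨hfd, hfd_lim, hfd_eq⟩ := hμf m
        obtain ⟨hgd, hgd_lim, hgd_eq⟩ := hμg m
        obtain ⟨hd, hd_lim, hd_eq⟩ := hρ m
        have h1 := cylinder_bound f g hf hg μf μg ρ m hfd hfd_lim hfd_eq hgd hgd_lim hgd_eq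
          hd hd_lim hd_eq hB
        have h2 := ENNReal.toReal_mono ?_ h1
        · rw [ENNReal.toReal_mul, ← ENNReal.toReal_rpow, ← ENNReal.toReal_rpow] at h2
          rwa [show ((‖ρ (proj m ⁻¹' B)‖₊ : ENNReal)).toReal = ‖ρ (proj m ⁻¹' B)‖ by
            simp [coe_nnnorm]] at h2
        · exact ENNReal.mul_ne_top
            (ENNReal.rpow_ne_top_of_nonneg (by norm_num) (measure_ne_top _ _))
            (ENNReal.rpow_ne_top_of_nonneg (by norm_num) (measure_ne_top _ _))
      have hsub : C ⊆ A ∪ A ∆ C := by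
        intro y hy
        by_cases h : y ∈ A
        · exact Or.inl h
        · exact Or.inr (Set.mem_symmDiff.mpr (Or.inr ⟨hy, h⟩))
      have hμfC : (μf C).toReal ≤ a + ε := by
        have h1 : μf C ≤ μf A + ENNReal.ofReal ε :=
          ((measure_mono hsub).trans (measure_union_le _ _)).trans
            (add_le_add_right (hsd' μf (Or.inl rfl)).le _)
        have h2 := ENNReal.toReal_mono
          (ENNReal.add_ne_top.mpr ⟨measure_ne_top _ _, ENNReal.ofReal_ne_top⟩) h1
        rwa [ENNReal.toReal_add (measure_ne_top _ _) ENNReal.ofReal_ne_top,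
          ENNReal.toReal_ofReal hε.le] at h2
      have hμgC : (μg C).toReal ≤ b + ε := by
        have h1 : μg C ≤ μg A + ENNReal.ofReal ε :=
          ((measure_mono hsub).trans (measure_union_le _ _)).trans
            (add_le_add_right (hsd' μg (Or.inr (Or.inl rfl))).le _)
        have h2 := ENNReal.toReal_mono
          (ENNReal.add_ne_top.mpr ⟨measure_ne_top _ _, ENNReal.ofReal_ne_top⟩) h1
        rwa [ENNReal.toReal_add (measure_ne_top _ _) ENNReal.ofReal_ne_top,
          ENNReal.toReal_ofReal hε.le] at h2
      have hsplitA : ρ A = ρ (A ∩ C) + ρ (A \ C) := by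
        conv_lhs => rw [← Set.inter_union_diff A C]
        exact VectorMeasure.of_union
          (disjoint_sdiff_self_right.mono_left Set.inter_subset_right)
          (hA.inter hCm) (hA.diff hCm)
      have hsplitC : ρ C = ρ (A ∩ C) + ρ (C \ A) := by
        conv_lhs => rw [← Set.inter_union_diff C A, Set.inter_comm C A]
        exact VectorMeasure.of_union
          (disjoint_sdiff_self_right.mono_left Set.inter_subset_left)
          (hA.inter hCm) (hCm.diff hA)
      have hbd : ∀ D : Set (ℕ → ℝ), MeasurableSet D → D ⊆ A ∆ C → ‖ρ D‖ ≤ ε := by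
        intro D hD hDsub
        refine (norm_apply_le_cmVar ρ hD).trans ?_
        have h1 : cmVar ρ D ≤ cmVar ρ (A ∆ C) := measure_mono hDsub
        have h2 := h1.trans (hsd' (cmVar ρ) (Or.inr (Or.inr rfl))).le
        have h3 := ENNReal.toReal_mono ENNReal.ofReal_ne_top h2
        rwa [ENNReal.toReal_ofReal hε.le] at h3
      have hdiff : ‖ρ A - ρ C‖ ≤ 2*ε := by
        have heq : ρ A - ρ C = ρ (A \ C) - ρ (C \ A) := by
          rw [hsplitA, hsplitC]; ring
        rw [heq]
        refine (norm_sub_le _ _).trans ?_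
        have d1 : ‖ρ (A \ C)‖ ≤ ε := hbd _ (hA.diff hCm)
          (fun y hy => Set.mem_symmDiff.mpr (Or.inl ⟨hy.1, hy.2⟩))
        have d2 : ‖ρ (C \ A)‖ ≤ ε := hbd _ (hCm.diff hA)
          (fun y hy => Set.mem_symmDiff.mpr (Or.inr ⟨hy.1, hy.2⟩))
        linarith
      have htri : ‖ρ A‖ ≤ ‖ρ C‖ + ‖ρ A - ρ C‖ := by
        simpa [add_sub_cancel] using norm_add_le (ρ C) (ρ A - ρ C)
      calc ‖ρ A‖ ≤ ‖ρ C‖ + ‖ρ A - ρ C‖ := htri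
        _ ≤ ((μf C).toReal) ^ (1/2:ℝ) * ((μg C).toReal) ^ (1/2:ℝ) + 2*ε := add_le_add hρC hdiff
        _ ≤ (a + ε) ^ (1/2:ℝ) * (b + ε) ^ (1/2:ℝ) + 2*ε := by
            refine add_le_add_left (mul_le_mul ?_ ?_ ?_ ?_) _
            · exact Real.rpow_le_rpow ENNReal.toReal_nonneg hμfC (by norm_num)
            · exact Real.rpow_le_rpow ENNReal.toReal_nonneg hμgC (by norm_num)
            · exact Real.rpow_nonneg ENNReal.toReal_nonneg _
            · exact Real.rpow_nonneg (by positivity) _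
    have hcont : Tendsto (fun ε : ℝ => (a + ε) ^ (1/2:ℝ) * (b + ε) ^ (1/2:ℝ) + 2*ε)
        (nhdsWithin 0 (Set.Ioi 0)) (𝓝 (a ^ (1/2:ℝ) * b ^ (1/2:ℝ))) := by
      have c1 : ContinuousAt (fun ε : ℝ => (a + ε) ^ (1/2:ℝ) * (b + ε) ^ (1/2:ℝ) + 2*ε) 0 := by
        refine ContinuousAt.add (ContinuousAt.mul ?_ ?_) (by fun_prop)
        · exact ((continuous_const.add continuous_id).continuousAt).rpow_const
            (Or.inr (by norm_num))
        · exact ((continuous_const.add continuous_id).continuousAt).rpow_const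
            (Or.inr (by norm_num))
      have c2 : Tendsto (fun ε : ℝ => (a + ε) ^ (1/2:ℝ) * (b + ε) ^ (1/2:ℝ) + 2*ε) (𝓝 0)
          (𝓝 (a ^ (1/2:ℝ) * b ^ (1/2:ℝ))) := by simpa using c1.tendsto
      exact c2.mono_left (nhdsWithin_le_nhds (s := Set.Ioi (0:ℝ)))
    refine ge_of_tendsto hcont ?_
    exact eventually_nhdsWithin_of_forall fun ε hε0 => hε ε hε0
  rw [← enorm_eq_nnnorm, ← ofReal_norm]
  calc ENNReal.ofReal ‖ρ A‖ ≤ ENNReal.ofReal (a ^ (1/2:ℝ) * b ^ (1/2:ℝ)) :=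
        ENNReal.ofReal_le_ofReal hreal
    _ = (μf A) ^ (1/2:ℝ) * (μg A) ^ (1/2:ℝ) := by
        rw [ha, hb, ENNReal.ofReal_mul (Real.rpow_nonneg ENNReal.toReal_nonneg _),
          ← ENNReal.ofReal_rpow_of_nonneg ENNReal.toReal_nonneg (by norm_num : (0:ℝ) ≤ 1/2),
          ← ENNReal.ofReal_rpow_of_nonneg ENNReal.toReal_nonneg (by norm_num : (0:ℝ) ≤ 1/2),
          ENNReal.ofReal_toReal (measure_ne_top μf A),
          ENNReal.ofReal_toReal (measure_ne_top μg A)]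

/-! ### Cauchy–Schwarz for sums -/

lemma tsum_rpow_half_mul (a b : ℕ → ENNReal) :
    ∑' i, (a i) ^ (1/2:ℝ) * (b i) ^ (1/2:ℝ)
      ≤ (∑' i, a i) ^ (1/2:ℝ) * (∑' i, b i) ^ (1/2:ℝ) := by
  have H := ENNReal.lintegral_mul_le_Lp_mul_Lq (Measure.count : Measure ℕ) two_conj
    (f := fun i => (a i) ^ (1/2:ℝ)) (g := fun i => (b i) ^ (1/2:ℝ))
    (measurable_of_countable _).aemeasurable (measurable_of_countable _).aemeasurable
  simp only [Pi.mul_apply] at H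
  rw [lintegral_count, lintegral_count, lintegral_count] at H
  have harith : ∀ c : ℕ → ENNReal, (∑' i, ((c i) ^ (1/2:ℝ)) ^ (2:ℝ)) = ∑' i, c i := by
    intro c
    refine tsum_congr fun i => ?_
    rw [← ENNReal.rpow_mul]; norm_num
  rwa [harith, harith] at H

end Aux

/-- The Cauchy–Schwarz inequality `|f·g|(E) ≤ √(|f|²(E)) √(|g|²(E))` for the product of two
square roots of measures. -/
theorem totalVariation_product_le (f g : ∀ n : ℕ, (Fin (n + 1) → ℝ) → ℂ)
    (hf : InL2 f) (hg : InL2 g)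
    (μf μg : Measure (ℕ → ℝ)) [IsFiniteMeasure μf] [IsFiniteMeasure μg]
    (hμf : ∀ n, ∃ h : (Fin (n + 1) → ℝ) → ℝ,
      (∀ᵐ x : Fin (n + 1) → ℝ,
        Tendsto (fun k => ∫ x' : Fin k → ℝ, ‖f (n + k) (app x x')‖ ^ 2) atTop (𝓝 (h x))) ∧
      μf.map (proj n) = volume.withDensity (fun x => ENNReal.ofReal (h x)))
    (hμg : ∀ n, ∃ h : (Fin (n + 1) → ℝ) → ℝ,
      (∀ᵐ x : Fin (n + 1) → ℝ,
        Tendsto (fun k => ∫ x' : Fin k → ℝ, ‖g (n + k) (app x x')‖ ^ 2) atTop (𝓝 (h x))) ∧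
      μg.map (proj n) = volume.withDensity (fun x => ENNReal.ofReal (h x)))
    (ρ : ComplexMeasure (ℕ → ℝ))
    (hρ : ∀ n, ∃ h : (Fin (n + 1) → ℝ) → ℂ,
      (∀ᵐ x : Fin (n + 1) → ℝ,
        Tendsto (fun k => ∫ x' : Fin k → ℝ,
          f (n + k) (app x x') * (starRingEnd ℂ) (g (n + k) (app x x'))) atTop (𝓝 (h x))) ∧
      ∀ E : Set (Fin (n + 1) → ℝ), MeasurableSet E → (ρ.map (proj n)) E = ∫ x in E, h x) :
    ∀ E : Set (ℕ → ℝ), MeasurableSet E →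
      cTV ρ E ≤ (μf E) ^ (1 / 2 : ℝ) * (μg E) ^ (1 / 2 : ℝ) := by
  intro E hE
  refine iSup_le ?_
  rintro ⟨P, hPm, hPd, hPU⟩
  have hbound : ∀ i, (‖ρ (P i)‖₊ : ENNReal) ≤ (μf (P i)) ^ (1/2:ℝ) * (μg (P i)) ^ (1/2:ℝ) :=
    fun i => borel_bound f g hf hg μf μg hμf hμg ρ hρ (hPm i)
  calc ∑' i, (‖ρ (P i)‖₊ : ENNReal)
      ≤ ∑' i, (μf (P i)) ^ (1/2:ℝ) * (μg (P i)) ^ (1/2:ℝ) := ENNReal.tsum_le_tsum hbound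
    _ ≤ (∑' i, μf (P i)) ^ (1/2:ℝ) * (∑' i, μg (P i)) ^ (1/2:ℝ) := tsum_rpow_half_mul _ _
    _ = (μf E) ^ (1/2:ℝ) * (μg E) ^ (1/2:ℝ) := by
        rw [← hPU, measure_iUnion hPd hPm, measure_iUnion hPd hPm]
end
end

section
/- Let {g^l}_{l≥1} be a sequence where each g^l = {g^l_n}_{n≥1} is a projective system of L² functions (so each n ↦ ∫_{ℝⁿ} |g^l_n − g^m_n|² dx is nondecreasing and bounded, hence convergent), and suppose the sequence is Cauchy in the sense that lim_{l,m→∞} lim_{n→∞} ∫_{ℝⁿ} |g^l_n(x) − g^m_n(x)|² dx = 0. Then there exists a superprojective system g' = {g'_n} of L² functions such that lim_{l→∞} lim_{n→∞} ∫_{ℝⁿ} |g^l_n(x) − g'_n(x)|² dx = 0. -/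
open MeasureTheory Filter Topology Real

noncomputable section

-- Auxiliary lemmas
def snocEquiv (n : ℕ) : ((Fin (n + 1) → ℝ) × ℝ) ≃ᵐ (Fin (n + 2) → ℝ) :=
  MeasurableEquiv.prodComm.trans
    (MeasurableEquiv.piFinSuccAbove (fun _ : Fin (n + 2) => ℝ) (Fin.last (n + 1))).symm

lemma snocEquiv_apply (n : ℕ) (p : (Fin (n + 1) → ℝ) × ℝ) :
    snocEquiv n p = Fin.snoc p.1 p.2 := by
  simp [snocEquiv, MeasurableEquiv.piFinSuccAbove, MeasurableEquiv.prodComm,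
    Fin.insertNthEquiv, Fin.insertNth_last']

lemma mp_snocEquiv (n : ℕ) :
    MeasurePreserving (snocEquiv n) (volume.prod volume) volume := by
  have h1 : MeasurePreserving (MeasurableEquiv.prodComm :
      ((Fin (n + 1) → ℝ) × ℝ) ≃ᵐ (ℝ × (Fin (n + 1) → ℝ))) (volume.prod volume)
      (volume.prod volume) :=
    ⟨MeasurableEquiv.prodComm.measurable, Measure.prod_swap⟩
  exact ((volume_preserving_piFinSuccAbove (fun _ : Fin (n + 2) => ℝ)
    (Fin.last (n + 1))).symm).comp h1

lemma memℒp_comp_snoc {n : ℕ} {a : (Fin (n + 2) → ℝ) → ℝ} (ha : MemLp a 2 volume) :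
    MemLp (fun p : (Fin (n + 1) → ℝ) × ℝ => a (Fin.snoc p.1 p.2)) 2 (volume.prod volume) := by
  have := ha.comp_measurePreserving (mp_snocEquiv n)
  have he : (a ∘ (snocEquiv n)) = fun p : (Fin (n + 1) → ℝ) × ℝ => a (Fin.snoc p.1 p.2) := by
    funext p; simp [Function.comp, snocEquiv_apply]
  rwa [he] at this

lemma ae_snoc {n : ℕ} {P : (Fin (n + 2) → ℝ) → Prop} (h : ∀ᵐ y : Fin (n + 2) → ℝ, P y) :
    ∀ᵐ x : Fin (n + 1) → ℝ, ∀ᵐ t : ℝ, P (Fin.snoc x t) := by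
  have h2 : ∀ᵐ p : (Fin (n + 1) → ℝ) × ℝ ∂(volume.prod volume), P (Fin.snoc p.1 p.2) := by
    have := (mp_snocEquiv n).quasiMeasurePreserving.ae h
    filter_upwards [this] with p hp
    rwa [snocEquiv_apply] at hp
  exact Measure.ae_ae_of_ae_prod h2

lemma fiber_memℒp {n : ℕ} {a : (Fin (n + 2) → ℝ) → ℝ} (ha : MemLp a 2 volume) :
    ∀ᵐ x : Fin (n + 1) → ℝ, MemLp (fun t => a (Fin.snoc x t)) 2 (volume : Measure ℝ) := by
  have hc := memℒp_comp_snoc ha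
  have hsq := hc.integrable_sq
  filter_upwards [hsq.prod_right_ae, hc.aestronglyMeasurable.prodMk_left] with x h1 h2
  exact (memLp_two_iff_integrable_sq h2).2 h1

lemma integrable_mul₂ {α : Type*} {m : MeasurableSpace α} {μ : Measure α} {f g : α → ℝ}
    (hf : MemLp f 2 μ) (hg : MemLp g 2 μ) : Integrable (fun x => f x * g x) μ := by
  have h := (((hf.add hg).integrable_sq).sub hf.integrable_sq).sub hg.integrable_sq
  have he : (fun x => f x * g x) = fun x => (((f x + g x) ^ 2 - f x ^ 2) - g x ^ 2) / 2 := by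
    funext x; ring
  rw [he]; exact h.div_const 2

/-- Cauchy–Schwarz for L² functions. -/
lemma integral_mul_le_CS {α : Type*} {m : MeasurableSpace α} {μ : Measure α} {f g : α → ℝ}
    (hf : MemLp f 2 μ) (hg : MemLp g 2 μ) (hf0 : 0 ≤ᵐ[μ] f) (hg0 : 0 ≤ᵐ[μ] g) :
    ∫ x, f x * g x ∂μ ≤ Real.sqrt (∫ x, f x ^ 2 ∂μ) * Real.sqrt (∫ x, g x ^ 2 ∂μ) := by
  have hpq : Real.HolderConjugate 2 2 := by constructor <;> norm_num
  have h2 : (ENNReal.ofReal (2:ℝ)) = 2 := by norm_num [ENNReal.ofReal_ofNat]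
  have := integral_mul_le_Lp_mul_Lq_of_nonneg hpq hf0 hg0 (by rwa [h2]) (by rwa [h2])
  calc ∫ x, f x * g x ∂μ ≤ (∫ a, f a ^ (2:ℝ) ∂μ) ^ ((1:ℝ) / 2) * (∫ a, g a ^ (2:ℝ) ∂μ) ^ ((1:ℝ) / 2) := this
    _ = Real.sqrt (∫ x, f x ^ 2 ∂μ) * Real.sqrt (∫ x, g x ^ 2 ∂μ) := by
        rw [← Real.sqrt_eq_rpow, ← Real.sqrt_eq_rpow]
        norm_num [Real.rpow_natCast]

lemma step_ineq {n : ℕ} {a b : (Fin (n + 2) → ℝ) → ℝ} {A B : (Fin (n + 1) → ℝ) → ℝ}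
    (ha : MemLp a 2 volume) (hb : MemLp b 2 volume)
    (hA : MemLp A 2 volume) (hB : MemLp B 2 volume)
    (ha0 : ∀ᵐ y : Fin (n + 2) → ℝ, 0 ≤ a y) (hb0 : ∀ᵐ y : Fin (n + 2) → ℝ, 0 ≤ b y)
    (hA0 : ∀ᵐ x : Fin (n + 1) → ℝ, 0 ≤ A x) (hB0 : ∀ᵐ x : Fin (n + 1) → ℝ, 0 ≤ B x)
    (hfa : ∀ᵐ x : Fin (n + 1) → ℝ, (∫ t : ℝ, a (Fin.snoc x t) ^ 2) = A x ^ 2)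
    (hfb : ∀ᵐ x : Fin (n + 1) → ℝ, (∫ t : ℝ, b (Fin.snoc x t) ^ 2) = B x ^ 2) :
    ∫ x : Fin (n + 1) → ℝ, (A x - B x) ^ 2 ≤ ∫ y : Fin (n + 2) → ℝ, (a y - b y) ^ 2 := by
  have hab : MemLp (fun y => a y - b y) 2 (volume : Measure (Fin (n + 2) → ℝ)) := ha.sub hb
  have hcomp := memℒp_comp_snoc hab
  have Isqprod : Integrable
      (fun p : (Fin (n + 1) → ℝ) × ℝ => (a (Fin.snoc p.1 p.2) - b (Fin.snoc p.1 p.2)) ^ 2)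
      (volume.prod volume) := hcomp.integrable_sq
  -- rewrite RHS as iterated integral
  have hRHS : ∫ y : Fin (n + 2) → ℝ, (a y - b y) ^ 2
      = ∫ x : Fin (n + 1) → ℝ, ∫ t : ℝ, (a (Fin.snoc x t) - b (Fin.snoc x t)) ^ 2 := by
    rw [← (mp_snocEquiv n).integral_comp (snocEquiv n).measurableEmbedding
      (fun y => (a y - b y) ^ 2)]
    rw [show (fun p : (Fin (n + 1) → ℝ) × ℝ => (a (snocEquiv n p) - b (snocEquiv n p)) ^ 2)
        = fun p : (Fin (n + 1) → ℝ) × ℝ =>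
          (a (Fin.snoc p.1 p.2) - b (Fin.snoc p.1 p.2)) ^ 2 from
      funext fun p => by rw [snocEquiv_apply]]
    exact integral_prod _ Isqprod
  rw [hRHS]
  -- pointwise a.e. inequality
  have hpt : ∀ᵐ x : Fin (n + 1) → ℝ, (A x - B x) ^ 2
      ≤ ∫ t : ℝ, (a (Fin.snoc x t) - b (Fin.snoc x t)) ^ 2 := by
    filter_upwards [fiber_memℒp ha, fiber_memℒp hb, ae_snoc ha0, ae_snoc hb0, hfa, hfb, hA0, hB0]
      with x hma hmb h0a h0b hia hib hA0x hB0x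
    have Ia := hma.integrable_sq
    have Ib := hmb.integrable_sq
    have Iab := integrable_mul₂ hma hmb
    have hCS := integral_mul_le_CS hma hmb h0a h0b
    rw [hia, hib, Real.sqrt_sq hA0x, Real.sqrt_sq hB0x] at hCS
    have hexp : ∫ t : ℝ, (a (Fin.snoc x t) - b (Fin.snoc x t)) ^ 2
        = (∫ t : ℝ, a (Fin.snoc x t) ^ 2) + (∫ t : ℝ, b (Fin.snoc x t) ^ 2)
          - 2 * ∫ t : ℝ, a (Fin.snoc x t) * b (Fin.snoc x t) := by
      have : (fun t : ℝ => (a (Fin.snoc x t) - b (Fin.snoc x t)) ^ 2)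
          = fun t : ℝ => (a (Fin.snoc x t) ^ 2 + b (Fin.snoc x t) ^ 2)
            - 2 * (a (Fin.snoc x t) * b (Fin.snoc x t)) := funext fun t => by ring
      have Iaddb : Integrable (fun t : ℝ => a (Fin.snoc x t) ^ 2 + b (Fin.snoc x t) ^ 2)
          (volume : Measure ℝ) := Ia.add Ib
      have I2ab : Integrable (fun t : ℝ => 2 * (a (Fin.snoc x t) * b (Fin.snoc x t)))
          (volume : Measure ℝ) := Iab.const_mul 2
      rw [this, integral_sub Iaddb I2ab, integral_add Ia Ib, integral_const_mul]
    rw [hexp, hia, hib]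
    nlinarith [hCS]
  exact integral_mono_ae (hA.sub hB).integrable_sq Isqprod.integral_prod_left hpt

lemma norm_sub_sq_eq {α : Type*} [MeasurableSpace α] {μ : Measure α} (f h : Lp ℝ 2 μ) :
    ‖f - h‖ ^ 2 = ∫ x, ((f : α → ℝ) x - (h : α → ℝ) x) ^ 2 ∂μ := by
  have h1 : (inner ℝ (f - h) (f - h) : ℝ) = ‖f - h‖ ^ 2 := real_inner_self_eq_norm_sq _
  rw [← h1, L2.inner_def]
  refine integral_congr_ae ?_
  filter_upwards [Lp.coeFn_sub f h] with x hx
  rw [hx]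
  simp [RCLike.inner_apply, conj_trivial, sq]

/-- A Cauchy sequence of projective systems of L² functions, in the distance
`‖g^l - g^m‖² = lim_n ∫_{ℝⁿ} |g^l_n - g^m_n|² dx`, converges to some superprojective
system: the key step in the completeness of `L²(ℝ^∞)`. -/
theorem cauchy_projective_systems_converge
    (g : ℕ → ∀ n : ℕ, (Fin (n + 1) → ℝ) → ℝ)
    (hSPS : ∀ l, IsSPS (g l))
    (hproj : ∀ l n, ∀ᵐ x : Fin (n + 1) → ℝ,
      (∫ t : ℝ, g l (n + 1) (Fin.snoc x t) ^ 2) = g l n x ^ 2)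
    (D : ℕ → ℕ → ℝ)
    (hD : ∀ l m, Tendsto (fun n => ∫ x : Fin (n + 1) → ℝ, (g l n x - g m n x) ^ 2)
      atTop (𝓝 (D l m)))
    (hCauchy : Tendsto (fun p : ℕ × ℕ => D p.1 p.2) atTop (𝓝 0)) :
    ∃ g' : ∀ n : ℕ, (Fin (n + 1) → ℝ) → ℝ, IsSPS g' ∧
      ∃ D' : ℕ → ℝ,
        (∀ l, Tendsto (fun n => ∫ x : Fin (n + 1) → ℝ, (g l n x - g' n x) ^ 2)
          atTop (𝓝 (D' l))) ∧
        Tendsto D' atTop (𝓝 0) := by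
  classical
  have hLp : ∀ l n, MemLp (g l n) 2 (volume : Measure (Fin (n + 1) → ℝ)) := fun l => (hSPS l).1
  have hpos : ∀ l n, ∀ᵐ x : Fin (n + 1) → ℝ, 0 ≤ g l n x := fun l => (hSPS l).2.1
  have hmono : ∀ l m, Monotone (fun n => ∫ x : Fin (n + 1) → ℝ, (g l n x - g m n x) ^ 2) := by
    intro l m
    refine monotone_nat_of_le_succ fun n => ?_
    exact step_ineq (hLp l (n + 1)) (hLp m (n + 1)) (hLp l n) (hLp m n)
      (hpos l (n + 1)) (hpos m (n + 1)) (hpos l n) (hpos m n) (hproj l n) (hproj m n)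
  have hDnonneg : ∀ l m, 0 ≤ D l m := fun l m =>
    ge_of_tendsto' (hD l m) fun n => integral_nonneg fun x => sq_nonneg _
  have hle : ∀ l m n, ∫ x : Fin (n + 1) → ℝ, (g l n x - g m n x) ^ 2 ≤ D l m :=
    fun l m => (hmono l m).ge_of_tendsto (hD l m)
  set Gl : ∀ n : ℕ, ℕ → Lp ℝ 2 (volume : Measure (Fin (n + 1) → ℝ)) :=
    fun n l => ((hLp l n).toLp (g l n)) with hGldef
  have hGlcoe : ∀ n l, (Gl n l : (Fin (n + 1) → ℝ) → ℝ) =ᵐ[volume] g l n := fun n l =>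
    (hLp l n).coeFn_toLp
  have hdist : ∀ n l m, ‖Gl n l - Gl n m‖ ^ 2
      = ∫ x : Fin (n + 1) → ℝ, (g l n x - g m n x) ^ 2 := by
    intro n l m
    rw [norm_sub_sq_eq]
    refine integral_congr_ae ?_
    filter_upwards [hGlcoe n l, hGlcoe n m] with x h1 h2
    rw [h1, h2]
  have hCau : ∀ ε : ℝ, 0 < ε → ∃ N : ℕ, ∀ l ≥ N, ∀ m ≥ N, D l m < ε := by
    intro ε hε
    have h := (Metric.tendsto_nhds.mp hCauchy) ε hε
    rw [Filter.eventually_atTop] at h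
    obtain ⟨p, hp⟩ := h
    refine ⟨max p.1 p.2, fun l hl m hm => ?_⟩
    have h2 := hp (l, m) ⟨le_trans (le_max_left _ _) hl, le_trans (le_max_right _ _) hm⟩
    have h3 : |D l m| < ε := by simpa [Real.dist_eq] using h2
    exact (abs_lt.mp h3).2
  have hcauchy : ∀ n, CauchySeq (Gl n) := by
    intro n
    rw [Metric.cauchySeq_iff]
    intro ε hε
    obtain ⟨N, hN⟩ := hCau (ε ^ 2) (by positivity)
    refine ⟨N, fun l hl m hm => ?_⟩
    have h1 : ‖Gl n l - Gl n m‖ ^ 2 ≤ D l m := by rw [hdist]; exact hle l m n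
    have h2 := hN l hl m hm
    have h3 : dist (Gl n l) (Gl n m) = ‖Gl n l - Gl n m‖ := dist_eq_norm _ _
    nlinarith [dist_nonneg (x := Gl n l) (y := Gl n m)]
  have hGex : ∀ n, ∃ G : Lp ℝ 2 (volume : Measure (Fin (n + 1) → ℝ)),
      Tendsto (Gl n) atTop (𝓝 G) := fun n => cauchySeq_tendsto_of_complete (hcauchy n)
  choose G hGt using hGex
  -- nonnegativity of the limit
  have hGpos : ∀ n, ∀ᵐ x : Fin (n + 1) → ℝ, 0 ≤ (G n : (Fin (n + 1) → ℝ) → ℝ) x := by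
    intro n
    obtain ⟨ns, hns, hae⟩ := (tendstoInMeasure_of_tendsto_Lp (hGt n)).exists_seq_tendsto_ae
    have hposall : ∀ᵐ x : Fin (n + 1) → ℝ, ∀ k, 0 ≤ (Gl n (ns k) : (Fin (n + 1) → ℝ) → ℝ) x := by
      rw [ae_all_iff]; intro k
      filter_upwards [hGlcoe n (ns k), hpos (ns k) n] with x h1 h2
      rw [h1]; exact h2
    filter_upwards [hae, hposall] with x h1 h2
    exact ge_of_tendsto' h1 h2
  -- superprojectivity of the limit
  have hsup : ∀ n, ∀ᵐ x : Fin (n + 1) → ℝ,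
      (∫ t : ℝ, (G (n + 1) : (Fin (n + 2) → ℝ) → ℝ) (Fin.snoc x t) ^ 2)
        ≤ (G n : (Fin (n + 1) → ℝ) → ℝ) x ^ 2 := by
    intro n
    obtain ⟨φ₁, hφ₁, hae₁⟩ :=
      (tendstoInMeasure_of_tendsto_Lp (hGt (n + 1))).exists_seq_tendsto_ae
    have hTM₂ : TendstoInMeasure volume
        (fun k => (Gl n (φ₁ k) : (Fin (n + 1) → ℝ) → ℝ)) atTop (G n) :=
      tendstoInMeasure_of_tendsto_Lp ((hGt n).comp hφ₁.tendsto_atTop)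
    obtain ⟨φ₂, hφ₂, hae₂⟩ := hTM₂.exists_seq_tendsto_ae
    set ψ : ℕ → ℕ := φ₁ ∘ φ₂ with hψ
    have haeg₁ : ∀ᵐ y : Fin (n + 2) → ℝ, Tendsto (fun k => g (ψ k) (n + 1) y) atTop
        (𝓝 ((G (n + 1) : (Fin (n + 2) → ℝ) → ℝ) y)) := by
      have hcoe : ∀ᵐ y : Fin (n + 2) → ℝ, ∀ k,
          (Gl (n + 1) (ψ k) : (Fin (n + 2) → ℝ) → ℝ) y = g (ψ k) (n + 1) y := by
        rw [ae_all_iff]; intro k; exact hGlcoe (n + 1) (ψ k)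
      filter_upwards [hae₁, hcoe] with y h1 h2
      have h3 : Tendsto (fun k => (Gl (n + 1) (ψ k) : (Fin (n + 2) → ℝ) → ℝ) y) atTop
          (𝓝 ((G (n + 1) : (Fin (n + 2) → ℝ) → ℝ) y)) := h1.comp hφ₂.tendsto_atTop
      exact h3.congr fun k => h2 k
    have haeg₂ : ∀ᵐ x : Fin (n + 1) → ℝ, Tendsto (fun k => g (ψ k) n x) atTop
        (𝓝 ((G n : (Fin (n + 1) → ℝ) → ℝ) x)) := by
      have hcoe : ∀ᵐ x : Fin (n + 1) → ℝ, ∀ k,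
          (Gl n (ψ k) : (Fin (n + 1) → ℝ) → ℝ) x = g (ψ k) n x := by
        rw [ae_all_iff]; intro k; exact hGlcoe n (ψ k)
      filter_upwards [hae₂, hcoe] with x h1 h2
      exact h1.congr fun k => h2 k
    have hfibg' := fiber_memℒp (Lp.memLp (G (n + 1)))
    have hfibk : ∀ᵐ x : Fin (n + 1) → ℝ, ∀ k,
        MemLp (fun t => g (ψ k) (n + 1) (Fin.snoc x t)) 2 (volume : Measure ℝ) := by
      rw [ae_all_iff]; intro k; exact fiber_memℒp (hLp (ψ k) (n + 1))
    have hprojk : ∀ᵐ x : Fin (n + 1) → ℝ, ∀ k,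
        (∫ t : ℝ, g (ψ k) (n + 1) (Fin.snoc x t) ^ 2) = g (ψ k) n x ^ 2 := by
      rw [ae_all_iff]; intro k; exact hproj (ψ k) n
    filter_upwards [hfibg', hfibk, hprojk, ae_snoc haeg₁, haeg₂] with x hm' hmk hpk hconv hx2
    have key : ∫⁻ t : ℝ, ENNReal.ofReal ((G (n + 1) : (Fin (n + 2) → ℝ) → ℝ) (Fin.snoc x t) ^ 2)
        ≤ ENNReal.ofReal ((G n : (Fin (n + 1) → ℝ) → ℝ) x ^ 2) := by
      have hlim : ∀ᵐ t : ℝ, ENNReal.ofReal ((G (n + 1) : (Fin (n + 2) → ℝ) → ℝ)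
          (Fin.snoc x t) ^ 2)
          = Filter.liminf (fun k => ENNReal.ofReal (g (ψ k) (n + 1) (Fin.snoc x t) ^ 2)) atTop := by
        filter_upwards [hconv] with t ht
        have h2 : Tendsto (fun k => ENNReal.ofReal (g (ψ k) (n + 1) (Fin.snoc x t) ^ 2)) atTop
            (𝓝 (ENNReal.ofReal ((G (n + 1) : (Fin (n + 2) → ℝ) → ℝ) (Fin.snoc x t) ^ 2))) :=
          (ENNReal.continuous_ofReal.tendsto _).comp (ht.pow 2)
        exact h2.liminf_eq.symm
      rw [lintegral_congr_ae hlim]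
      have hstep1 : ∫⁻ t : ℝ, Filter.liminf
            (fun k => ENNReal.ofReal (g (ψ k) (n + 1) (Fin.snoc x t) ^ 2)) atTop
          ≤ Filter.liminf
            (fun k => ∫⁻ t : ℝ, ENNReal.ofReal (g (ψ k) (n + 1) (Fin.snoc x t) ^ 2)) atTop :=
        lintegral_liminf_le' fun k =>
          (((hmk k).aestronglyMeasurable.aemeasurable.pow_const 2).ennreal_ofReal)
      refine hstep1.trans ?_
      have hstep2 : ∀ k, ∫⁻ t : ℝ, ENNReal.ofReal (g (ψ k) (n + 1) (Fin.snoc x t) ^ 2)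
          = ENNReal.ofReal (g (ψ k) n x ^ 2) := by
        intro k
        rw [← ofReal_integral_eq_lintegral_ofReal (hmk k).integrable_sq
          (Eventually.of_forall fun t => sq_nonneg _), hpk k]
      have hstep3 : Filter.liminf
          (fun k => ∫⁻ t : ℝ, ENNReal.ofReal (g (ψ k) (n + 1) (Fin.snoc x t) ^ 2)) atTop
          = ENNReal.ofReal ((G n : (Fin (n + 1) → ℝ) → ℝ) x ^ 2) := by
        have h4 : Tendsto (fun k => ENNReal.ofReal (g (ψ k) n x ^ 2)) atTop
            (𝓝 (ENNReal.ofReal ((G n : (Fin (n + 1) → ℝ) → ℝ) x ^ 2))) :=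
          (ENNReal.continuous_ofReal.tendsto _).comp (hx2.pow 2)
        rw [show (fun k => ∫⁻ t : ℝ, ENNReal.ofReal (g (ψ k) (n + 1) (Fin.snoc x t) ^ 2))
          = fun k => ENNReal.ofReal (g (ψ k) n x ^ 2) from funext hstep2]
        exact h4.liminf_eq
      exact le_of_eq hstep3
    have hint : Integrable (fun t : ℝ => (G (n + 1) : (Fin (n + 2) → ℝ) → ℝ)
        (Fin.snoc x t) ^ 2) volume := hm'.integrable_sq
    have heq := ofReal_integral_eq_lintegral_ofReal hint
      (Eventually.of_forall fun t => sq_nonneg _)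
    rw [← heq] at key
    exact (ENNReal.ofReal_le_ofReal_iff (sq_nonneg _)).mp key
  -- the limiting distances
  set A : ℕ → ℕ → ℝ := fun l n => ‖Gl n l - G n‖ with hAdef
  have hAt2 : ∀ l n, Tendsto (fun m => ‖Gl n l - Gl n m‖ ^ 2) atTop (𝓝 (A l n ^ 2)) :=
    fun l n => ((tendsto_const_nhds.sub (hGt n)).norm).pow 2
  have hterm : ∀ l n, ∫ x : Fin (n + 1) → ℝ, (g l n x - (G n : (Fin (n + 1) → ℝ) → ℝ) x) ^ 2
      = A l n ^ 2 := by
    intro l n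
    rw [hAdef]
    rw [norm_sub_sq_eq (Gl n l) (G n)]
    refine integral_congr_ae ?_
    filter_upwards [hGlcoe n l] with x h1
    rw [h1]
  have claim : ∀ ε : ℝ, 0 < ε → ∃ N, ∀ l ≥ N, ∀ n, A l n ^ 2 ≤ ε := by
    intro ε hε
    obtain ⟨N, hN⟩ := hCau ε hε
    refine ⟨N, fun l hl n => ?_⟩
    refine le_of_tendsto (hAt2 l n) ?_
    filter_upwards [eventually_ge_atTop N] with m hm
    calc ‖Gl n l - Gl n m‖ ^ 2 = ∫ x : Fin (n + 1) → ℝ, (g l n x - g m n x) ^ 2 := hdist n l m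
      _ ≤ D l m := hle l m n
      _ ≤ ε := (hN l hl m hm).le
  have hmonoA : ∀ l, Monotone (fun n => A l n ^ 2) := by
    intro l
    refine monotone_nat_of_le_succ fun n => ?_
    refine le_of_tendsto_of_tendsto' (hAt2 l n) (hAt2 l (n + 1)) fun m => ?_
    rw [hdist n l m, hdist (n + 1) l m]
    exact hmono l m (Nat.le_succ n)
  obtain ⟨N₁, hN₁⟩ := claim 1 one_pos
  have hbdd : ∀ l, BddAbove (Set.range fun n => A l n ^ 2) := by
    intro l
    refine ⟨(Real.sqrt (D l N₁) + 1) ^ 2, ?_⟩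
    rintro _ ⟨n, rfl⟩
    have h1 : ‖Gl n l - Gl n N₁‖ ≤ Real.sqrt (D l N₁) := by
      have h0 : ‖Gl n l - Gl n N₁‖ ^ 2 ≤ D l N₁ := by rw [hdist]; exact hle l N₁ n
      nlinarith [Real.sqrt_nonneg (D l N₁), Real.sq_sqrt (hDnonneg l N₁),
        norm_nonneg (Gl n l - Gl n N₁)]
    have h2 : A N₁ n ≤ 1 := by
      have h3 := hN₁ N₁ le_rfl n
      nlinarith [norm_nonneg (Gl n N₁ - G n)]
    have h3 : A l n ≤ ‖Gl n l - Gl n N₁‖ + A N₁ n := by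
      have h4 := dist_triangle (Gl n l) (Gl n N₁) (G n)
      simpa [hAdef, dist_eq_norm] using h4
    have h5 : A l n ≤ Real.sqrt (D l N₁) + 1 := by linarith
    have h6 : (0 : ℝ) ≤ A l n := norm_nonneg _
    show A l n ^ 2 ≤ (Real.sqrt (D l N₁) + 1) ^ 2
    nlinarith
  refine ⟨fun n => (G n : (Fin (n + 1) → ℝ) → ℝ),
    ⟨fun n => Lp.memLp _, hGpos, hsup⟩, fun l => ⨆ n, A l n ^ 2, fun l => ?_, ?_⟩
  · exact (tendsto_atTop_ciSup (hmonoA l) (hbdd l)).congr fun n => (hterm l n).symm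
  · rw [Metric.tendsto_atTop]
    intro ε hε
    obtain ⟨N, hN⟩ := claim (ε / 2) (by linarith)
    refine ⟨N, fun l hl => ?_⟩
    have h1 : (⨆ n, A l n ^ 2) ≤ ε / 2 := ciSup_le fun n => hN l hl n
    have h2 : (0 : ℝ) ≤ ⨆ n, A l n ^ 2 := le_ciSup_of_le (hbdd l) 0 (sq_nonneg _)
    rw [Real.dist_eq, sub_zero, abs_of_nonneg h2]
    linarith
end
end

section
/- Let T > 0 and let φ : [0,T] → ℝ be continuous with φ(0) = 0. If φ has quadratic variation ⟨φ⟩_T, then lim_{N→∞} (2^N/T) ∫₀^{T − T/2^N} |φ(t + T/2^N) − φ(t)|² dt = ⟨φ⟩_T. More precisely, for every positive integer N, inf_{|Δ| ≤ T/2^N} Q_T(φ,Δ) − sup_{0 ≤ v ≤ T/2^N} ( |φ(v) − φ(0)|² + |φ(T) − φ(T−v)|² ) ≤ (2^N/T) ∫₀^{T − T/2^N} |φ(t + T/2^N) − φ(t)|² dt ≤ sup_{|Δ| ≤ T/2^N} Q_T(φ,Δ), where the infimum and supremum are over partitions Δ of [0,T] with mesh at most T/2^N. -/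
open MeasureTheory Filter Topology Real intervalIntegral

noncomputable section

/-- `v 0 = 0 < v 1 < ⋯ < v n = T` is a partition of `[0, T]` into `n` subintervals. -/
def IsPartition (T : ℝ) (n : ℕ) (v : ℕ → ℝ) : Prop :=
  0 < n ∧ v 0 = 0 ∧ v n = T ∧ ∀ i < n, v i < v (i + 1)

/-- The quadratic variation sum `Q_T(φ, Δ) = ∑ |φ(v_i) - φ(v_{i-1})|²` of `φ` over the
partition `v`. -/
def quadSum (φ : ℝ → ℝ) (n : ℕ) (v : ℕ → ℝ) : ℝ :=
  ∑ i ∈ Finset.range n, (φ (v (i + 1)) - φ (v i)) ^ 2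

/-- `φ` has quadratic variation `q` over `[0, T]`: `Q_T(φ, Δ) → q` as the mesh `|Δ| → 0`. -/
def HasQuadVar (T : ℝ) (φ : ℝ → ℝ) (q : ℝ) : Prop :=
  ∀ ε > 0, ∃ δ > 0, ∀ (n : ℕ) (v : ℕ → ℝ), IsPartition T n v →
    (∀ i < n, v (i + 1) - v i < δ) → |quadSum φ n v - q| < ε

/-- The set of quadratic variation sums of `φ` over partitions of `[0,T]` of mesh `≤ δ`. -/
def quadSums (T : ℝ) (φ : ℝ → ℝ) (δ : ℝ) : Set ℝ :=
  {Q | ∃ (n : ℕ) (v : ℕ → ℝ), IsPartition T n v ∧ (∀ i < n, v (i + 1) - v i ≤ δ) ∧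
    Q = quadSum φ n v}

lemma quadSum_nonneg (φ : ℝ → ℝ) (n : ℕ) (v : ℕ → ℝ) : 0 ≤ quadSum φ n v :=
  Finset.sum_nonneg fun _ _ => sq_nonneg _

lemma quadSums_bddBelow (T : ℝ) (φ : ℝ → ℝ) (δ : ℝ) : BddBelow (quadSums T φ δ) := by
  refine ⟨0, ?_⟩
  rintro Q ⟨n, v, _, _, rfl⟩
  exact quadSum_nonneg φ n v

lemma dyadic_mem_quadSums (T : ℝ) (hT : 0 < T) (φ : ℝ → ℝ) (N : ℕ) :
    quadSum φ (2 ^ N) (fun i => i * (T / 2 ^ N)) ∈ quadSums T φ (T / 2 ^ N) := by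
  have h2 : (0:ℝ) < 2 ^ N := by positivity
  refine ⟨2 ^ N, _, ⟨Nat.pow_pos (n := N) (by norm_num) |>.trans_le le_rfl, by simp, ?_, ?_⟩, ?_, rfl⟩
  · push_cast
    field_simp
  · intro i _
    have : ((i:ℝ)+1) * (T / 2 ^ N) - i * (T / 2 ^ N) = T / 2 ^ N := by ring
    push_cast
    nlinarith [div_pos hT h2]
  · intro i _
    push_cast
    have : ((i:ℝ)+1) * (T / 2 ^ N) - i * (T / 2 ^ N) = T / 2 ^ N := by ring
    linarith [this.le]

/-- shifted partition: `0, s, s+h, ..., s+m*h, T`, with `n = m+2` intervals. -/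
def shiftPart (s h T : ℝ) (m : ℕ) : ℕ → ℝ :=
  fun i => if i ≤ m + 1 then (if i = 0 then 0 else s + (i - 1 : ℕ) * h) else T

lemma shiftPart_isPartition (s h T : ℝ) (m : ℕ) (hs : 0 < s) (hsh : s < h)
    (hmh : ((m:ℝ) + 1) * h = T) :
    IsPartition T (m + 2) (shiftPart s h T m) ∧
    (∀ i < m + 2, shiftPart s h T m (i + 1) - shiftPart s h T m i ≤ h) := by
  have hh : 0 < h := hs.trans hsh
  have hval : ∀ i, 1 ≤ i → i ≤ m + 1 → shiftPart s h T m i = s + ((i:ℝ) - 1) * h := by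
    intro i h1 h2
    simp only [shiftPart, if_pos h2, if_neg (by omega : ¬ i = 0)]
    congr 2
    simp [Nat.cast_sub h1]
  have h0 : shiftPart s h T m 0 = 0 := by simp [shiftPart]
  have hlast : shiftPart s h T m (m + 2) = T := by simp [shiftPart]
  have hstep : ∀ i < m + 2, shiftPart s h T m i < shiftPart s h T m (i + 1) ∧
      shiftPart s h T m (i + 1) - shiftPart s h T m i ≤ h := by
    intro i hi
    rcases Nat.eq_zero_or_pos i with rfl | h1
    · rw [h0, hval 1 le_rfl (by omega)]
      constructor <;> [skip; skip] <;> push_cast <;> nlinarith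
    rcases eq_or_lt_of_le (Nat.lt_succ_iff.mp (by omega : i < m + 2)) with heq | hlt
    · -- i = m + 1
      rw [heq, hlast, hval (m+1) (by omega) le_rfl]
      push_cast
      constructor <;> nlinarith
    · -- 1 ≤ i, i + 1 ≤ m + 1
      rw [hval i h1 (by omega), hval (i+1) (by omega) (by omega)]
      push_cast
      constructor <;> nlinarith
  exact ⟨⟨by omega, h0, hlast, fun i hi => (hstep i hi).1⟩, fun i hi => (hstep i hi).2⟩

lemma shiftPart_quadSum (φ : ℝ → ℝ) (s h T : ℝ) (m : ℕ) :
    quadSum φ (m + 2) (shiftPart s h T m) =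
      (φ s - φ 0) ^ 2 + (∑ k ∈ Finset.range m, (φ (s + k * h + h) - φ (s + k * h)) ^ 2)
        + (φ T - φ (s + m * h)) ^ 2 := by
  have hval : ∀ i, 1 ≤ i → i ≤ m + 1 → shiftPart s h T m i = s + ((i:ℝ) - 1) * h := by
    intro i h1 h2
    simp only [shiftPart, if_pos h2, if_neg (by omega : ¬ i = 0)]
    congr 2
    simp [Nat.cast_sub h1]
  have h0 : shiftPart s h T m 0 = 0 := by simp [shiftPart]
  have hlast : shiftPart s h T m (m + 2) = T := by simp [shiftPart]
  rw [quadSum, Finset.sum_range_succ, Finset.sum_range_succ']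
  rw [hlast, hval (m+1) (by omega) le_rfl, hval 1 le_rfl (by omega), h0]
  have hmid : ∀ k ∈ Finset.range m,
      (φ (shiftPart s h T m (k + 1 + 1)) - φ (shiftPart s h T m (k + 1))) ^ 2
        = (φ (s + k * h + h) - φ (s + k * h)) ^ 2 := by
    intro k hk
    rw [Finset.mem_range] at hk
    rw [hval (k+1) (by omega) (by omega), hval (k+2) (by omega) (by omega)]
    push_cast
    ring_nf
  rw [Finset.sum_congr rfl hmid]
  push_cast
  simp only [add_sub_cancel_right]
  rw [sub_self, zero_mul, add_zero]
  ring

lemma key (T : ℝ) (hT : 0 < T) (φ : ℝ → ℝ) (hφc : ContinuousOn φ (Set.Icc 0 T))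
    (N : ℕ) (hN : 1 ≤ N) :
    (sInf (quadSums T φ (T / 2 ^ N)) -
        sSup ((fun v => (φ v - φ 0) ^ 2 + (φ T - φ (T - v)) ^ 2) ''
          Set.Icc 0 (T / 2 ^ N)) ≤
      (2 ^ N / T) * ∫ t in (0 : ℝ)..(T - T / 2 ^ N), (φ (t + T / 2 ^ N) - φ t) ^ 2) ∧
    ∀ r ∈ upperBounds (quadSums T φ (T / 2 ^ N)),
      (2 ^ N / T) * ∫ t in (0 : ℝ)..(T - T / 2 ^ N), (φ (t + T / 2 ^ N) - φ t) ^ 2 ≤ r := by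
  have h2 : (0:ℝ) < 2 ^ N := by positivity
  set h : ℝ := T / 2 ^ N with hdef
  have hh : 0 < h := div_pos hT h2
  have h2one : (1:ℝ) ≤ 2 ^ N := one_le_pow₀ (by norm_num)
  have hhT : h ≤ T := by
    rw [hdef, div_le_iff₀ h2]; nlinarith
  set m : ℕ := 2 ^ N - 1 with hmdef
  have hcast : (m:ℝ) + 1 = 2 ^ N := by
    have h1 : 1 ≤ 2 ^ N := Nat.one_le_two_pow
    rw [hmdef]; push_cast [h1]; ring
  have hmh : ((m:ℝ) + 1) * h = T := by
    rw [hcast, hdef]; field_simp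
  have hTh : T - h = (m:ℝ) * h := by nlinarith
  have hfrac : (2:ℝ) ^ N / T = 1 / h := by
    rw [hdef]; field_simp
  set F : ℝ → ℝ := fun t => (φ (t + h) - φ t) ^ 2 with hFdef
  have hF : ContinuousOn F (Set.Icc 0 (T - h)) := by
    apply ContinuousOn.pow
    apply ContinuousOn.sub
    · exact hφc.comp ((continuous_add_right h).continuousOn)
        (fun t ht => ⟨by linarith [ht.1], by linarith [ht.2]⟩)
    · exact hφc.mono (Set.Icc_subset_Icc le_rfl (by linarith))
  set Qt : ℝ → ℝ := fun s => ∑ k ∈ Finset.range m, F (s + k * h) with hQtdef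
  -- maps
  have hmaps : ∀ k : ℕ, k < m → Set.MapsTo (fun s => s + (k:ℝ) * h) (Set.Icc 0 h)
      (Set.Icc 0 (T - h)) := by
    intro k hk s hs
    have hkm : (k:ℝ) + 1 ≤ (m:ℝ) := by exact_mod_cast hk
    simp only [Set.mem_Icc] at hs ⊢
    have hk0 : (0:ℝ) ≤ (k:ℝ) * h := by positivity
    constructor
    · linarith [hs.1]
    · rw [hTh]; nlinarith [hs.2]
  have hQtc : ContinuousOn Qt (Set.Icc 0 h) := by
    apply continuousOn_finset_sum
    intro k hk
    exact hF.comp ((continuous_add_right _).continuousOn) (hmaps k (Finset.mem_range.mp hk))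
  -- Step A : the integral identity
  have hintk : ∀ k ∈ Finset.range m,
      IntervalIntegrable (fun s => F (s + k * h)) MeasureTheory.volume 0 h := by
    intro k hk
    apply ContinuousOn.intervalIntegrable
    rw [Set.uIcc_of_le hh.le]
    exact hF.comp ((continuous_add_right _).continuousOn) (hmaps k (Finset.mem_range.mp hk))
  have stepA : (∫ t in (0:ℝ)..(T - h), F t) = ∫ s in (0:ℝ)..h, Qt s := by
    rw [hQtdef]
    rw [intervalIntegral.integral_finset_sum hintk]
    have e1 : ∀ k ∈ Finset.range m, (∫ s in (0:ℝ)..h, F (s + k * h))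
        = ∫ t in (((k:ℕ):ℝ) * h)..((((k+1:ℕ)):ℝ) * h), F t := by
      intro k _
      rw [intervalIntegral.integral_comp_add_right F ((k:ℝ) * h)]
      congr 1
      · ring
      · push_cast; ring
    rw [Finset.sum_congr rfl e1]
    rw [intervalIntegral.sum_integral_adjacent_intervals (a := fun k => ((k:ℕ):ℝ) * h)]
    · norm_num
      rw [hTh]
    · intro k hk
      apply ContinuousOn.intervalIntegrable
      have hle : ((k:ℕ):ℝ) * h ≤ (((k+1:ℕ)):ℝ) * h := by
        push_cast; nlinarith
      rw [Set.uIcc_of_le hle]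
      apply hF.mono
      apply Set.Icc_subset_Icc
      · positivity
      · rw [hTh]
        have : ((k:ℝ) + 1) ≤ (m:ℝ) := by exact_mod_cast hk
        push_cast; nlinarith
  -- boundary function
  set bf : ℝ → ℝ := fun v => (φ v - φ 0) ^ 2 + (φ T - φ (T - v)) ^ 2 with hbfdef
  have hbfc : ContinuousOn bf (Set.Icc 0 h) := by
    apply ContinuousOn.add
    · exact ((hφc.mono (Set.Icc_subset_Icc le_rfl hhT)).sub continuousOn_const).pow 2
    · apply ContinuousOn.pow
      apply ContinuousOn.sub continuousOn_const
      exact hφc.comp ((continuous_const.sub continuous_id).continuousOn)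
        (fun v hv => ⟨by simp; linarith [hv.2], by simp; linarith [hv.1]⟩)
  set B : ℝ := sSup (bf '' Set.Icc 0 h) with hBdef
  have hBdd : BddAbove (bf '' Set.Icc 0 h) :=
    (isCompact_Icc.image_of_continuousOn hbfc).bddAbove
  have hbB : ∀ v ∈ Set.Icc 0 h, bf v ≤ B :=
    fun v hv => le_csSup hBdd (Set.mem_image_of_mem _ hv)
  -- pointwise bounds on the open interval
  have hpt : ∀ s ∈ Set.Ioo (0:ℝ) h,
      quadSum φ (m + 2) (shiftPart s h T m) ∈ quadSums T φ h ∧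
      quadSum φ (m + 2) (shiftPart s h T m)
        = (φ s - φ 0) ^ 2 + Qt s + (φ T - φ (T - (h - s))) ^ 2 := by
    intro s hs
    obtain ⟨hpart, hmesh⟩ := shiftPart_isPartition s h T m hs.1 hs.2 hmh
    refine ⟨⟨m + 2, _, hpart, hmesh, rfl⟩, ?_⟩
    rw [shiftPart_quadSum φ s h T m]
    have hTm : s + (m:ℝ) * h = T - (h - s) := by linarith
    rw [hTm]
  have hlowpt : ∀ s ∈ Set.Ioo (0:ℝ) h,
      sInf (quadSums T φ h) - ((φ s - φ 0) ^ 2 + (φ T - φ (T - (h - s))) ^ 2) ≤ Qt s := by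
    intro s hs
    obtain ⟨hmem, heq⟩ := hpt s hs
    have := csInf_le (quadSums_bddBelow T φ h) hmem
    linarith [heq ▸ this]
  -- continuity of the lower bound function on Icc 0 h
  have hlbc : ContinuousOn (fun s =>
      sInf (quadSums T φ h) - ((φ s - φ 0) ^ 2 + (φ T - φ (T - (h - s))) ^ 2))
      (Set.Icc 0 h) := by
    apply ContinuousOn.sub continuousOn_const
    apply ContinuousOn.add
    · exact ((hφc.mono (Set.Icc_subset_Icc le_rfl hhT)).sub continuousOn_const).pow 2
    · apply ContinuousOn.pow
      apply ContinuousOn.sub continuousOn_const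
      refine hφc.comp (by fun_prop) ?_
      intro v hv
      simp only [Set.mem_Icc] at hv ⊢
      constructor <;> linarith [hv.1, hv.2]
  -- extend lower bound to the closed interval
  have hlow : ∀ s ∈ Set.Icc (0:ℝ) h,
      sInf (quadSums T φ h) - ((φ s - φ 0) ^ 2 + (φ T - φ (T - (h - s))) ^ 2) ≤ Qt s := by
    have hcl : closure (Set.Ioo (0:ℝ) h) = Set.Icc 0 h := closure_Ioo hh.ne
    intro s hs
    refine le_on_closure (s := Set.Ioo (0:ℝ) h) hlowpt ?_ ?_ ?_
    · rw [hcl]; exact hlbc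
    · rw [hcl]; exact hQtc
    · rw [hcl]; exact hs
  -- integrability facts on [0,h]
  have hQtint : IntervalIntegrable Qt MeasureTheory.volume 0 h := by
    apply ContinuousOn.intervalIntegrable
    rwa [Set.uIcc_of_le hh.le]
  have hlbint : IntervalIntegrable (fun s =>
      sInf (quadSums T φ h) - ((φ s - φ 0) ^ 2 + (φ T - φ (T - (h - s))) ^ 2))
      MeasureTheory.volume 0 h := by
    apply ContinuousOn.intervalIntegrable
    rwa [Set.uIcc_of_le hh.le]
  constructor
  · -- lower bound
    have int1 : (∫ s in (0:ℝ)..h,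
        (sInf (quadSums T φ h) - ((φ s - φ 0) ^ 2 + (φ T - φ (T - (h - s))) ^ 2)))
        ≤ ∫ s in (0:ℝ)..h, Qt s :=
      intervalIntegral.integral_mono_on hh.le hlbint hQtint hlow
    -- compute the LHS integral
    have hgint : IntervalIntegrable (fun s => (φ T - φ (T - (h - s))) ^ 2)
        MeasureTheory.volume 0 h := by
      apply ContinuousOn.intervalIntegrable
      rw [Set.uIcc_of_le hh.le]
      apply ContinuousOn.pow
      apply ContinuousOn.sub continuousOn_const
      refine hφc.comp (by fun_prop) ?_
      intro v hv
      simp only [Set.mem_Icc] at hv ⊢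
      constructor <;> linarith [hv.1, hv.2]
    have hfint : IntervalIntegrable (fun s => (φ s - φ 0) ^ 2)
        MeasureTheory.volume 0 h := by
      apply ContinuousOn.intervalIntegrable
      rw [Set.uIcc_of_le hh.le]
      exact ((hφc.mono (Set.Icc_subset_Icc le_rfl hhT)).sub continuousOn_const).pow 2
    have hbfint : IntervalIntegrable bf MeasureTheory.volume 0 h := by
      apply ContinuousOn.intervalIntegrable
      rwa [Set.uIcc_of_le hh.le]
    have hrefl : (∫ s in (0:ℝ)..h, (φ T - φ (T - (h - s))) ^ 2)
        = ∫ v in (0:ℝ)..h, (φ T - φ (T - v)) ^ 2 := by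
      have := intervalIntegral.integral_comp_sub_left
        (a := (0:ℝ)) (b := h) (fun v => (φ T - φ (T - v)) ^ 2) h
      simpa using this
    have hg2int : IntervalIntegrable (fun v => (φ T - φ (T - v)) ^ 2)
        MeasureTheory.volume 0 h := by
      apply ContinuousOn.intervalIntegrable
      rw [Set.uIcc_of_le hh.le]
      apply ContinuousOn.pow
      apply ContinuousOn.sub continuousOn_const
      refine hφc.comp (by fun_prop) ?_
      intro v hv
      simp only [Set.mem_Icc] at hv ⊢
      constructor <;> linarith [hv.1, hv.2]
    have hbfsplit : (∫ s in (0:ℝ)..h, bf s)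
        = (∫ s in (0:ℝ)..h, (φ s - φ 0) ^ 2) + ∫ s in (0:ℝ)..h, (φ T - φ (T - s)) ^ 2 := by
      rw [hbfdef]
      exact intervalIntegral.integral_add hfint hg2int
    have hsplit : (∫ s in (0:ℝ)..h,
        (sInf (quadSums T φ h) - ((φ s - φ 0) ^ 2 + (φ T - φ (T - (h - s))) ^ 2)))
        = sInf (quadSums T φ h) * h - ∫ s in (0:ℝ)..h, bf s := by
      rw [intervalIntegral.integral_sub intervalIntegrable_const (hfint.add hgint)]
      rw [intervalIntegral.integral_add hfint hgint]
      rw [hrefl, hbfsplit, intervalIntegral.integral_const]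
      simp [smul_eq_mul]
      ring
    have hbfB : (∫ s in (0:ℝ)..h, bf s) ≤ B * h := by
      have := intervalIntegral.integral_mono_on hh.le hbfint intervalIntegrable_const hbB
      rw [intervalIntegral.integral_const] at this
      simpa [mul_comm] using this
    rw [hfrac, stepA]
    have hfinal : sInf (quadSums T φ h) * h - B * h ≤ ∫ s in (0:ℝ)..h, Qt s := by
      rw [hsplit] at int1
      linarith
    rw [div_mul_eq_mul_div, one_mul, le_div_iff₀ hh]
    linarith
  · -- upper bound
    intro r hr
    have huppt : ∀ s ∈ Set.Ioo (0:ℝ) h, Qt s ≤ r := by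
      intro s hs
      obtain ⟨hmem, heq⟩ := hpt s hs
      have h1 := hr hmem
      rw [heq] at h1
      nlinarith [sq_nonneg (φ s - φ 0), sq_nonneg (φ T - φ (T - (h - s)))]
    have hupp : ∀ s ∈ Set.Icc (0:ℝ) h, Qt s ≤ r := by
      have hcl : closure (Set.Ioo (0:ℝ) h) = Set.Icc 0 h := closure_Ioo hh.ne
      intro s hs
      refine le_on_closure (s := Set.Ioo (0:ℝ) h) huppt ?_ ?_ ?_
      · rw [hcl]; exact hQtc
      · exact continuousOn_const
      · rw [hcl]; exact hs
    have int2 : (∫ s in (0:ℝ)..h, Qt s) ≤ ∫ s in (0:ℝ)..h, (r:ℝ) :=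
      intervalIntegral.integral_mono_on hh.le hQtint intervalIntegrable_const hupp
    rw [intervalIntegral.integral_const] at int2
    rw [hfrac, stepA]
    rw [div_mul_eq_mul_div, one_mul, div_le_iff₀ hh]
    simp at int2
    nlinarith


set_option maxHeartbeats 1000000 in
/-- If `φ ∈ C₀[0,T]` has quadratic variation `⟨φ⟩_T`, then
`(2^N/T) ∫₀^{T-T/2^N} |φ(t+T/2^N) - φ(t)|² dt → ⟨φ⟩_T`; more precisely this quantity is
squeezed between `inf_{|Δ|≤T/2^N} Q_T(φ,Δ) - sup_{0≤v≤T/2^N}(|φ(v)-φ(0)|² + |φ(T)-φ(T-v)|²)`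
and `sup_{|Δ|≤T/2^N} Q_T(φ,Δ)`. -/
theorem dyadic_time_average_tendsto_quadVar (T : ℝ) (hT : 0 < T) (φ : ℝ → ℝ)
    (hφc : ContinuousOn φ (Set.Icc 0 T)) (hφ0 : φ 0 = 0)
    (q : ℝ) (hq : HasQuadVar T φ q) :
    Tendsto (fun N : ℕ => (2 ^ N / T) *
        ∫ t in (0 : ℝ)..(T - T / 2 ^ N), (φ (t + T / 2 ^ N) - φ t) ^ 2)
      atTop (𝓝 q) ∧
    ∀ N : ℕ, 1 ≤ N →
      (sInf (quadSums T φ (T / 2 ^ N)) -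
          sSup ((fun v => (φ v - φ 0) ^ 2 + (φ T - φ (T - v)) ^ 2) ''
            Set.Icc 0 (T / 2 ^ N)) ≤
        (2 ^ N / T) * ∫ t in (0 : ℝ)..(T - T / 2 ^ N), (φ (t + T / 2 ^ N) - φ t) ^ 2) ∧
      ∀ r ∈ upperBounds (quadSums T φ (T / 2 ^ N)),
        (2 ^ N / T) * ∫ t in (0 : ℝ)..(T - T / 2 ^ N), (φ (t + T / 2 ^ N) - φ t) ^ 2 ≤ r := by
  refine ⟨?_, fun N hN => key T hT φ hφc N hN⟩
  have main : ∀ ε > 0, ∃ M : ℕ, ∀ n ≥ M,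
      |(2 ^ n / T) * (∫ t in (0 : ℝ)..(T - T / 2 ^ n), (φ (t + T / 2 ^ n) - φ t) ^ 2) - q|
        ≤ ε := by
    intro ε hε
    obtain ⟨δ, hδ, hδq⟩ := hq (ε/2) (by positivity)
    set ε' : ℝ := min 1 (ε/4) with hε'def
    have hε' : 0 < ε' := lt_min one_pos (by positivity)
    have hc0 : ContinuousWithinAt φ (Set.Icc 0 T) 0 := hφc 0 (Set.left_mem_Icc.mpr hT.le)
    obtain ⟨δ₁, hδ₁, hδ₁p⟩ := Metric.continuousWithinAt_iff.mp hc0 ε' hε'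
    have hcT : ContinuousWithinAt φ (Set.Icc 0 T) T := hφc T (Set.right_mem_Icc.mpr hT.le)
    obtain ⟨δ₂, hδ₂, hδ₂p⟩ := Metric.continuousWithinAt_iff.mp hcT ε' hε'
    set δ' : ℝ := min δ (min δ₁ δ₂) with hδ'def
    have hδ'pos : 0 < δ' := lt_min hδ (lt_min hδ₁ hδ₂)
    obtain ⟨M₀, hM₀⟩ := exists_pow_lt_of_lt_one (div_pos hδ'pos hT) (by norm_num : (1:ℝ)/2 < 1)
    refine ⟨max M₀ 1, fun n hn => ?_⟩
    have hn1 : 1 ≤ n := le_trans (le_max_right _ _) hn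
    have hnM : M₀ ≤ n := le_trans (le_max_left _ _) hn
    have h2 : (0:ℝ) < 2 ^ n := by positivity
    have hsm : T / 2 ^ n < δ' := by
      have h1 : ((1:ℝ)/2) ^ n ≤ ((1:ℝ)/2) ^ M₀ :=
        pow_le_pow_of_le_one (by norm_num) (by norm_num) hnM
      have he : T / 2 ^ n = T * ((1:ℝ)/2) ^ n := by
        rw [div_eq_mul_inv]
        congr 1
        rw [← inv_pow]
        norm_num
      rw [he]
      calc T * ((1:ℝ)/2) ^ n ≤ T * ((1:ℝ)/2) ^ M₀ := by nlinarith
        _ < T * (δ'/T) := by nlinarith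
        _ = δ' := by field_simp
    have hhT : T / 2 ^ n ≤ T := by
      rw [div_le_iff₀ h2]
      nlinarith [one_le_pow₀ (by norm_num : (1:ℝ) ≤ 2) (n := n)]
    have hclose : ∀ Q ∈ quadSums T φ (T / 2 ^ n), |Q - q| < ε/2 := by
      rintro Q ⟨k, v, hpart, hmesh, rfl⟩
      refine hδq k v hpart (fun i hi => lt_of_le_of_lt (hmesh i hi) ?_)
      exact lt_of_lt_of_le hsm (min_le_left _ _)
    have hne : (quadSums T φ (T / 2 ^ n)).Nonempty := ⟨_, dyadic_mem_quadSums T hT φ n⟩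
    have hInf : q - ε/2 ≤ sInf (quadSums T φ (T / 2 ^ n)) :=
      le_csInf hne (fun Q hQ => by have := abs_lt.mp (hclose Q hQ); linarith)
    have hub : (q + ε/2) ∈ upperBounds (quadSums T φ (T / 2 ^ n)) :=
      fun Q hQ => by have := abs_lt.mp (hclose Q hQ); linarith
    have hbsup : sSup ((fun v => (φ v - φ 0) ^ 2 + (φ T - φ (T - v)) ^ 2) ''
        Set.Icc 0 (T / 2 ^ n)) ≤ ε/2 := by
      apply Real.sSup_le ?_ (by positivity)
      rintro x ⟨v, hv, rfl⟩
      have hv0 : (0:ℝ) ≤ v := hv.1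
      have hvh : v ≤ T / 2 ^ n := hv.2
      have hvT : v ∈ Set.Icc (0:ℝ) T := ⟨hv0, le_trans hvh hhT⟩
      have hTv : T - v ∈ Set.Icc (0:ℝ) T := ⟨by linarith [hvT.2], by linarith⟩
      have h1 : |φ v - φ 0| < ε' := by
        have hd : dist v (0:ℝ) < δ₁ := by
          rw [Real.dist_eq, sub_zero, abs_of_nonneg hv0]
          exact lt_of_le_of_lt hvh (lt_of_lt_of_le hsm
            (le_trans (min_le_right _ _) (min_le_left _ _)))
        have := hδ₁p hvT hd
        rwa [Real.dist_eq] at this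
      have h2' : |φ (T - v) - φ T| < ε' := by
        have hd : dist (T - v) T < δ₂ := by
          rw [Real.dist_eq]
          have he : T - v - T = -v := by ring
          rw [he, abs_neg, abs_of_nonneg hv0]
          exact lt_of_le_of_lt hvh (lt_of_lt_of_le hsm
            (le_trans (min_le_right _ _) (min_le_right _ _)))
        have := hδ₂p hTv hd
        rwa [Real.dist_eq] at this
      have e1 : ε' ≤ 1 := min_le_left _ _
      have e2 : ε' ≤ ε/4 := min_le_right _ _
      have a1 := abs_lt.mp h1
      have a2 := abs_lt.mp h2'
      have hx2 : (φ v - φ 0) ^ 2 ≤ ε' ^ 2 := by nlinarith [a1.1, a1.2]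
      have hy2 : (φ T - φ (T - v)) ^ 2 ≤ ε' ^ 2 := by nlinarith [a2.1, a2.2]
      have hee : ε' ^ 2 ≤ ε/4 := by nlinarith
      simp only []
      linarith
    obtain ⟨hlow, hupp⟩ := key T hT φ hφc n hn1
    have hI1 : (2 ^ n / T) * (∫ t in (0 : ℝ)..(T - T / 2 ^ n),
        (φ (t + T / 2 ^ n) - φ t) ^ 2) ≤ q + ε/2 := hupp _ hub
    have hI2 : q - ε/2 - ε/2 ≤ (2 ^ n / T) * (∫ t in (0 : ℝ)..(T - T / 2 ^ n),
        (φ (t + T / 2 ^ n) - φ t) ^ 2) := le_trans (by linarith) hlow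
    rw [abs_le]
    constructor <;> linarith
  rw [Metric.tendsto_atTop]
  intro ε hε
  obtain ⟨M, hM⟩ := main (ε/2) (by positivity)
  refine ⟨M, fun n hn => ?_⟩
  have h := hM n hn
  rw [Real.dist_eq]
  exact lt_of_le_of_lt h (by linarith)
end
end
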